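/- arXiv:1004.2223 — 2 statements merged into one kernel-verified Lean document; each statement's English description precedes it below -/
import Mathlib

section
/- Over the ring $B = \mathbb{Z}[q^{\pm1}, v_1^{\pm1}, \dots, v_m^{\pm1}][(q-1)^{-1}]$, the image of the centre of the affine Hecke algebra $H_2^{\mathrm{aff}}$ under the quotient map to the cyclotomic Hecke algebra $\mathcal{K}_2^{\mathbf v}$ is equal to the full centre of $\mathcal{K}_2^{\mathbf v}$. -/
noncomputable section

/-- The ring `A = ℤ[q^{±1}, v₁^{±1}, …, v_m^{±1}]`, realized as the group
algebra of `ℤ × ℤ^m` over `ℤ`. -/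
abbrev Av (m : ℕ) : Type := AddMonoidAlgebra ℤ (ℤ × (Fin m → ℤ))

/-- The element `q`. -/
def qv (m : ℕ) : Av m := AddMonoidAlgebra.single (1, 0) 1

/-- The element `vᵢ`. -/
def vv (m : ℕ) (i : Fin m) : Av m := AddMonoidAlgebra.single (0, Pi.single i 1) 1

/-- The `j`-th elementary symmetric polynomial of `v₁, …, v_m`. -/
def ev (m : ℕ) (j : ℕ) : Av m :=
  ∑ s ∈ Finset.powersetCard j (Finset.univ : Finset (Fin m)), ∏ i ∈ s, vv m i

/-- The Laurent polynomial ring `A[X₁^{±1}, X₂^{±1}]`. -/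
abbrev Lau (A : Type) [CommRing A] : Type := AddMonoidAlgebra A (ℤ × ℤ)

variable (A : Type) [CommRing A]

/-- The monomial `X₁^i X₂^j`. -/
def Xm (i j : ℤ) : Lau A := AddMonoidAlgebra.single (i, j) 1

/-- The automorphism `s` interchanging `X₁` and `X₂`. -/
def sw (p : Lau A) : Lau A := AddMonoidAlgebra.ofCoeff (Finsupp.equivMapDomain (Equiv.prodComm ℤ ℤ) p.coeff)

/-- Constants. -/
def CC (a : A) : Lau A := algebraMap A (Lau A) a

/-- `p` is `m`-restricted. -/
def Res (m : ℕ) (p : Lau A) : Prop :=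
  ∀ ab ∈ p.coeff.support, 0 ≤ ab.1 ∧ ab.1 ≤ (m : ℤ) - 1 ∧ 0 ≤ ab.2 ∧ ab.2 ≤ (m : ℤ) - 1

/-- `f_v(X₁) = ∏ᵢ (X₁ - vᵢ)`. -/
def fv1 (m : ℕ) : Lau (Av m) := ∏ i : Fin m, (Xm (Av m) 1 0 - CC (Av m) (vv m i))

/-- `f_v(X₂) = ∏ᵢ (X₂ - vᵢ)`. -/
def fv2 (m : ℕ) : Lau (Av m) := ∏ i : Fin m, (Xm (Av m) 0 1 - CC (Av m) (vv m i))

/-- The complete homogeneous symmetric polynomial `H_k` in `X₁, X₂`. -/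
def Hc (k : ℕ) : Lau A := ∑ i ∈ Finset.range (k + 1), Xm A (i : ℤ) ((k : ℤ) - (i : ℤ))

/-- The element `z = (-1)^{m+1} e_m + X₁X₂ ∑_{j=0}^{m-2} (-1)^j e_j H_{m-2-j}`. -/
def zel (m : ℕ) : Lau (Av m) :=
  CC (Av m) ((-1 : Av m) ^ (m + 1) * ev m m) +
    Xm (Av m) 1 1 *
      ∑ j ∈ Finset.range (m - 1), CC (Av m) ((-1 : Av m) ^ j * ev m j) * Hc (Av m) (m - 2 - j)
/-- The ring `B = A[(q-1)⁻¹]`, the localization of `A` away from `q-1`. -/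
abbrev Bv (m : ℕ) : Type := Localization.Away (qv m - 1)

/-- The element `q` of `B`. -/
def qB (m : ℕ) : Bv m := algebraMap (Av m) (Bv m) (qv m)

/-- The element `vᵢ` of `B`. -/
def vB (m : ℕ) (i : Fin m) : Bv m := algebraMap (Av m) (Bv m) (vv m i)

/-- `f_v(X₁) = ∏ᵢ (X₁ - vᵢ)` over `B`. -/
def fv1B (m : ℕ) : Lau (Bv m) := ∏ i : Fin m, (Xm (Bv m) 1 0 - CC (Bv m) (vB m i))


namespace Hx

variable {A : Type} [CommRing A]

lemma Xm_mul (a b c d : ℤ) : Xm A a b * Xm A c d = Xm A (a+c) (b+d) := by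
  simp [Xm, AddMonoidAlgebra.single_mul_single, Prod.mk_add_mk]

lemma Xm_zero : Xm A 0 0 = 1 := rfl

lemma CC_one : CC A (1 : A) = 1 := map_one _

lemma CC_mul (a b : A) : CC A (a*b) = CC A a * CC A b := map_mul _ a b

lemma CC_neg (a : A) : CC A (-a) = -CC A a := map_neg _ a

def swA : Lau A ≃ₐ[A] Lau A :=
  AddMonoidAlgebra.domCongr A A (AddEquiv.prodComm : (ℤ×ℤ) ≃+ (ℤ×ℤ))

lemma sw_eq_swA (p : Lau A) : sw A p = swA p := by
  ext ab; simp [sw, swA]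

lemma sw_single (ab : ℤ × ℤ) (c : A) :
    sw A (AddMonoidAlgebra.single ab c) = AddMonoidAlgebra.single (ab.2, ab.1) c := by
  rw [sw_eq_swA, swA, AddMonoidAlgebra.domCongr_single]; rfl

lemma sw_add (p q : Lau A) : sw A (p + q) = sw A p + sw A q := by
  simp [sw_eq_swA, map_add]

lemma sw_mul (p q : Lau A) : sw A (p * q) = sw A p * sw A q := by
  simp [sw_eq_swA, map_mul]

lemma sw_sub (p q : Lau A) : sw A (p - q) = sw A p - sw A q := by
  simp [sw_eq_swA, map_sub]

lemma sw_one : sw A (1 : Lau A) = 1 := by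
  simp [sw_eq_swA, map_one]

lemma sw_neg (p : Lau A) : sw A (-p) = -sw A p := by
  simp [sw_eq_swA, map_neg]

lemma sw_sw (p : Lau A) : sw A (sw A p) = p := by
  ext ab; simp [sw]

lemma sw_Xm (a b : ℤ) : sw A (Xm A a b) = Xm A b a := sw_single (a,b) 1

lemma CC_def (a : A) : CC A a = AddMonoidAlgebra.single 0 a := rfl

lemma sw_CC (a : A) : sw A (CC A a) = CC A a := by
  rw [CC_def]; exact sw_single 0 a

lemma sw_sum {s : Finset ℕ} (f : ℕ → Lau A) : sw A (∑ j ∈ s, f j) = ∑ j ∈ s, sw A (f j) := by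
  simp [sw_eq_swA, map_sum]

lemma sw_prod {ι : Type} {s : Finset ι} (f : ι → Lau A) :
    sw A (∏ j ∈ s, f j) = ∏ j ∈ s, sw A (f j) := by
  simp [sw_eq_swA, map_prod]

lemma sw_Hc (k : ℕ) : sw A (Hc A k) = Hc A k := by
  have hdef : Hc A k = ∑ i ∈ Finset.range (k+1), Xm A (i:ℤ) ((k:ℤ)-i) := rfl
  rw [hdef, sw_sum, Finset.sum_congr rfl (fun i (hi : i ∈ Finset.range (k+1)) => sw_Xm _ _)]
  have h0 := Finset.sum_range_reflect (fun i => Xm A (i:ℤ) ((k:ℤ)-i)) (k+1)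
  rw [← h0]
  refine Finset.sum_congr rfl (fun j hj => ?_)
  rw [Finset.mem_range] at hj
  have e1 : ((k + 1 - 1 - j : ℕ) : ℤ) = (k:ℤ) - j := by omega
  rw [e1]
  congr 1
  omega

-- Res lemmas
variable {m : ℕ}

lemma mem_supp {p : Lau A} {ab : ℤ × ℤ} (h : ab ∈ p.coeff.support) : p.coeff ab ≠ 0 :=
  Finsupp.mem_support_iff.mp h

lemma res_zero : Res A m (0 : Lau A) := by intro ab h; simp at h

lemma res_add {p q : Lau A} (hp : Res A m p) (hq : Res A m q) : Res A m (p + q) := by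
  intro ab h
  rcases Finset.mem_union.mp (Finsupp.support_add h) with h' | h'
  exacts [hp ab h', hq ab h']

lemma res_neg {p : Lau A} (hp : Res A m p) : Res A m (-p) := by
  intro ab h
  refine hp ab ?_
  have := mem_supp h
  rw [AddMonoidAlgebra.coeff_neg, Finsupp.neg_apply] at this
  rw [neg_ne_zero] at this
  exact Finsupp.mem_support_iff.mpr this

lemma res_sub {p q : Lau A} (hp : Res A m p) (hq : Res A m q) : Res A m (p - q) := by
  rw [sub_eq_add_neg]; exact res_add hp (res_neg hq)

lemma res_sw {p : Lau A} (hp : Res A m p) : Res A m (sw A p) := by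
  intro ab h
  have : p.coeff (ab.2, ab.1) ≠ 0 := by
    have := mem_supp h
    simp [sw, Finsupp.equivMapDomain_apply] at this; exact this
  have := hp (ab.2, ab.1) (Finsupp.mem_support_iff.mpr this)
  tauto

lemma sw_zero : sw A (0 : Lau A) = 0 := by
  ext ab; simp [sw]

lemma supp_sw {p : Lau A} {ab : ℤ×ℤ} (h : ab ∈ (sw A p).coeff.support) : (ab.2, ab.1) ∈ p.coeff.support := by
  have : p.coeff (ab.2, ab.1) ≠ 0 := by
    have := mem_supp h
    simp [sw, Finsupp.equivMapDomain_apply] at this; exact this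
  exact Finsupp.mem_support_iff.mpr this

lemma supp_CC_mul {c : A} {p : Lau A} : (CC A c * p).coeff.support ⊆ p.coeff.support := by
  classical
  intro ab h
  have h2 := AddMonoidAlgebra.support_coeff_mul_subset (CC A c) p h
  rw [Finset.mem_add] at h2
  obtain ⟨x, hx, y, hy, rfl⟩ := h2
  have : x = 0 := by
    have := Finsupp.support_single_subset (α := ℤ×ℤ) (a := (0:ℤ×ℤ)) (b := c) hx
    simpa using this
  simpa [this] using hy

lemma res_CC_mul {c : A} {p : Lau A} (hp : Res A m p) : Res A m (CC A c * p) := by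
  intro ab h; exact hp ab (supp_CC_mul h)

-- divided differences
def dd1 (ab : ℤ × ℤ) (c : A) : Lau A :=
  if ab.2 < ab.1 then
    -(∑ t ∈ Finset.range (ab.1 - ab.2).toNat, AddMonoidAlgebra.single (ab.2 + t, ab.1 - t) c)
  else
    ∑ t ∈ Finset.range (ab.2 - ab.1).toNat, AddMonoidAlgebra.single (ab.1 + t, ab.2 - t) c

def dd (p : Lau A) : Lau A := p.coeff.sum (fun ab c => dd1 ab c)

lemma single_mul_u (a b : ℤ) (c : A) :
    AddMonoidAlgebra.single (a, b) c * (Xm A 1 (-1)) = AddMonoidAlgebra.single (a+1, b-1) c := by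
  simp [Xm, AddMonoidAlgebra.single_mul_single, Prod.mk_add_mk, sub_eq_add_neg]

lemma tele (i j : ℤ) (k : ℕ) (hk : i + k = j) (c : A) :
    (∑ t ∈ Finset.range k, AddMonoidAlgebra.single ((i + t : ℤ), (j - t : ℤ)) c) *
      (1 - Xm A 1 (-1)) =
    AddMonoidAlgebra.single (i, j) c - AddMonoidAlgebra.single (j, i) c := by
  set f : ℕ → Lau A := fun t => AddMonoidAlgebra.single ((i + t : ℤ), (j - t : ℤ)) c with hf
  rw [mul_sub, mul_one, Finset.sum_mul]
  have h1 : ∀ t ∈ Finset.range k, f t * Xm A 1 (-1) = f (t + 1) := by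
    intro t _
    rw [hf]
    simp only
    rw [single_mul_u]
    congr 1
    rw [Prod.mk.injEq]
    constructor <;> push_cast <;> ring
  rw [Finset.sum_congr rfl h1, ← Finset.sum_sub_distrib, Finset.sum_range_sub' f k]
  rw [hf]
  simp only
  have e0 : ((i + ((0:ℕ):ℤ)), (j - ((0:ℕ):ℤ))) = (i, j) := by rw [Prod.mk.injEq]; push_cast; omega
  have ek : ((i + ((k:ℕ):ℤ)), (j - ((k:ℕ):ℤ))) = (j, i) := by rw [Prod.mk.injEq]; omega
  rw [e0, ek]

lemma dd1_mul (ab : ℤ × ℤ) (c : A) :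
    dd1 ab c * (1 - Xm A 1 (-1))
      = AddMonoidAlgebra.single ab c - AddMonoidAlgebra.single (ab.2, ab.1) c := by
  obtain ⟨a, b⟩ := ab
  unfold dd1
  by_cases h : b < a
  · rw [if_pos h, neg_mul, tele b a (a - b).toNat (by omega) c]
    simp only
    abel
  · rw [if_neg h, tele a b (b - a).toNat (by omega) c]

lemma dd1_zero (ab : ℤ × ℤ) : dd1 ab (0 : A) = 0 := by
  unfold dd1; split <;> simp

lemma dd1_add (ab : ℤ × ℤ) (c d : A) : dd1 ab (c + d) = dd1 ab c + dd1 ab d := by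
  unfold dd1; split <;> (simp [Finsupp.single_add, Finset.sum_add_distrib]; try abel)

lemma dd_mul (p : Lau A) : dd p * (1 - Xm A 1 (-1)) = p - sw A p := by
  induction p using AddMonoidAlgebra.induction_linear with
  | zero => simp [dd, sw]
  | add f g hf hg =>
    have : dd (f + g) = dd f + dd g := Finsupp.sum_add_index (by intro ab _; exact dd1_zero ab)
      (by intro ab _ c d; exact dd1_add ab c d)
    rw [this, add_mul, hf, hg, sw_add]
    ring
  | single ab c =>
    have : dd (AddMonoidAlgebra.single ab c) = dd1 ab c :=
      Finsupp.sum_single_index (dd1_zero ab)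
    rw [this, dd1_mul, sw_single]

lemma res_dd {p : Lau A} (hp : Res A m p) : Res A m (dd p) := by
  intro xy hxy
  rw [dd, AddMonoidAlgebra.coeff_finsuppSum] at hxy
  have h1 := Finsupp.support_sum hxy
  rw [Finset.mem_biUnion] at h1
  obtain ⟨ab, hab, hxy2⟩ := h1
  obtain ⟨ha1, ha2, hb1, hb2⟩ := hp ab hab
  obtain ⟨a, b⟩ := ab
  simp only at ha1 ha2 hb1 hb2
  unfold dd1 at hxy2
  have key : ∀ (i j : ℤ) (k : ℕ) (c : A), (i:ℤ) + k = j → 0 ≤ i → j ≤ (m:ℤ) - 1 →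
      xy ∈ (∑ t ∈ Finset.range k, AddMonoidAlgebra.single ((i + t : ℤ), (j - t : ℤ)) c).coeff.support →
      0 ≤ xy.1 ∧ xy.1 ≤ (m:ℤ)-1 ∧ 0 ≤ xy.2 ∧ xy.2 ≤ (m:ℤ)-1 := by
    intro i j k c hk hi hj hxy3
    rw [AddMonoidAlgebra.coeff_sum] at hxy3
    have h2 := Finsupp.support_finset_sum hxy3
    rw [Finset.mem_biUnion] at h2
    obtain ⟨t, ht, hxy4⟩ := h2
    have h3 := Finsupp.support_single_subset hxy4
    rw [Finset.mem_singleton] at h3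
    subst h3
    rw [Finset.mem_range] at ht
    have : (t : ℤ) < k := by exact_mod_cast ht
    refine ⟨by simp; omega, by simp; omega, by simp; omega, by simp; omega⟩
  split at hxy2
  · next h =>
    rw [AddMonoidAlgebra.coeff_neg, Finsupp.support_neg] at hxy2
    exact key b a (a - b).toNat _ (by omega) (by omega) (by omega) hxy2
  · next h =>
    exact key a b (b - a).toNat _ (by omega) (by omega) (by omega) hxy2

-- Vieta
lemma vieta {ι : Type} [DecidableEq ι] (w : ι → A) (s : Finset ι) :
    ∏ i ∈ s, (Xm A 1 0 - CC A (w i)) =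
      ∑ t ∈ s.powerset, CC A ((-1)^t.card * ∏ i ∈ t, w i) * Xm A ((s.card : ℤ) - t.card) 0 := by
  classical
  induction s using Finset.induction_on with
  | empty => simp [CC_one, Xm_zero]
  | @insert a s ha ih =>
    rw [Finset.prod_insert ha, ih, Finset.sum_powerset_insert ha, sub_mul, Finset.mul_sum,
      Finset.mul_sum]
    have h1 : ∀ t ∈ s.powerset,
        Xm A 1 0 * (CC A ((-1)^t.card * ∏ i ∈ t, w i) * Xm A ((s.card : ℤ) - t.card) 0)
        = CC A ((-1)^t.card * ∏ i ∈ t, w i) * Xm A (((insert a s).card : ℤ) - t.card) 0 := by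
      intro t ht
      rw [mul_left_comm, Xm_mul, Finset.card_insert_of_notMem ha]
      congr 2
      push_cast; ring
    have h2 : ∀ t ∈ s.powerset,
        CC A (w a) * (CC A ((-1)^t.card * ∏ i ∈ t, w i) * Xm A ((s.card : ℤ) - t.card) 0)
        = -(CC A ((-1)^(insert a t).card * ∏ i ∈ insert a t, w i) *
            Xm A (((insert a s).card : ℤ) - (insert a t).card) 0) := by
      intro t ht
      have hat : a ∉ t := fun hc => ha (Finset.mem_powerset.mp ht hc)
      rw [Finset.card_insert_of_notMem hat, Finset.card_insert_of_notMem ha,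
        Finset.prod_insert hat, ← mul_assoc, ← CC_mul, ← neg_mul, ← CC_neg]
      congr 2
      · ring
      · push_cast; ring
    rw [Finset.sum_congr rfl h1, Finset.sum_congr rfl h2, sub_eq_add_neg, ← Finset.sum_neg_distrib]
    simp only [neg_neg]

-- telescope for Hc
lemma tele_H (k : ℕ) :
    (Xm A 0 1 - Xm A 1 0) * Hc A k = Xm A 0 ((k:ℤ)+1) - Xm A ((k:ℤ)+1) 0 := by
  set f : ℕ → Lau A := fun i => Xm A (i:ℤ) ((k:ℤ)+1-i) with hf
  have step : (Xm A 0 1 - Xm A 1 0) * Hc A k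
      = ∑ i ∈ Finset.range (k+1), (f i - f (i+1)) := by
    rw [Hc, Finset.mul_sum]
    refine Finset.sum_congr rfl (fun i hi => ?_)
    rw [sub_mul, Xm_mul, Xm_mul, hf]
    simp only
    congr 2 <;> push_cast <;> ring
  rw [step, Finset.sum_range_sub' f (k+1), hf]
  simp only
  congr 2 <;> push_cast <;> ring

lemma zel_id (m : ℕ) (hm : 1 ≤ m) (c : ℕ → A) :
    (Xm A 0 1 - Xm A 1 0) *
      (CC A (-(c m)) + Xm A 1 1 * ∑ j ∈ Finset.range (m-1), CC A (c j) * Hc A (m-2-j))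
    = Xm A 1 0 * (∑ j ∈ Finset.range (m+1), CC A (c j) * Xm A 0 ((m:ℤ)-j))
      - Xm A 0 1 * (∑ j ∈ Finset.range (m+1), CC A (c j) * Xm A ((m:ℤ)-j) 0) := by
  have key : ∀ j : ℕ, Xm A 1 0 * (CC A (c j) * Xm A 0 ((m:ℤ)-j))
      - Xm A 0 1 * (CC A (c j) * Xm A ((m:ℤ)-j) 0)
      = CC A (c j) * (Xm A 1 ((m:ℤ)-j) - Xm A ((m:ℤ)-j) 1) := by
    intro j
    rw [mul_left_comm, mul_left_comm (Xm A 0 1), Xm_mul, Xm_mul, mul_sub]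
    norm_num
  have hR : Xm A 1 0 * (∑ j ∈ Finset.range (m+1), CC A (c j) * Xm A 0 ((m:ℤ)-j))
      - Xm A 0 1 * (∑ j ∈ Finset.range (m+1), CC A (c j) * Xm A ((m:ℤ)-j) 0)
      = ∑ j ∈ Finset.range (m+1), CC A (c j) * (Xm A 1 ((m:ℤ)-j) - Xm A ((m:ℤ)-j) 1) := by
    rw [Finset.mul_sum, Finset.mul_sum, ← Finset.sum_sub_distrib]
    exact Finset.sum_congr rfl (fun j _ => key j)
  rw [hR, show m + 1 = (m-1) + 1 + 1 by omega, Finset.sum_range_succ, Finset.sum_range_succ]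
  have e1 : ((m:ℤ) - ((m-1 : ℕ) : ℤ)) = 1 := by omega
  have e2 : ((m:ℤ) - (((m-1 : ℕ) + 1 : ℕ) : ℤ)) = 0 := by omega
  have e3 : (m - 1 + 1 : ℕ) = m := by omega
  rw [e1, e2, e3, sub_self, mul_zero, add_zero]
  have lhs2 : ∀ j ∈ Finset.range (m-1),
      (Xm A 0 1 - Xm A 1 0) * (CC A (c j) * Hc A (m-2-j))
      = CC A (c j) * (Xm A 0 (((m-2-j:ℕ):ℤ)+1) - Xm A (((m-2-j:ℕ):ℤ)+1) 0) := by
    intro j hj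
    rw [mul_left_comm, tele_H]
  rw [mul_add, Finset.mul_sum]
  have lhs3 : ∀ j ∈ Finset.range (m-1),
      (Xm A 0 1 - Xm A 1 0) * (Xm A 1 1 * (CC A (c j) * Hc A (m-2-j)))
      = CC A (c j) * (Xm A 1 ((m:ℤ)-j) - Xm A ((m:ℤ)-j) 1) := by
    intro j hj
    rw [Finset.mem_range] at hj
    rw [mul_left_comm, lhs2 j (Finset.mem_range.mpr hj), mul_left_comm, mul_sub, Xm_mul, Xm_mul]
    have c1 : (1:ℤ) + (((m-2-j:ℕ):ℤ)+1) = (m:ℤ) - j := by omega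
    have c2 : (1:ℤ) + 0 = 1 := by omega
    rw [c1, c2]
  rw [Finset.mul_sum, Finset.sum_congr rfl lhs3]
  have lhs1 : (Xm A 0 1 - Xm A 1 0) * CC A (-(c m)) = CC A (c m) * (Xm A 1 0 - Xm A 0 1) := by
    rw [CC_neg]
    ring
  rw [lhs1]
  ring

-- slicing and division
def slX (N s : ℤ) (p : Lau A) : Lau A :=
  p.coeff.sum (fun ab c => if ab.1 = N then AddMonoidAlgebra.single (ab.1 - s, ab.2) c else 0)

def rsX (N : ℤ) (p : Lau A) : Lau A :=
  p.coeff.sum (fun ab c => if ab.1 = N then 0 else AddMonoidAlgebra.single ab c)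

lemma slX_split (N s : ℤ) (p : Lau A) :
    p = slX N s p * Xm A s 0 + rsX N p := by
  have h1 : slX N s p * Xm A s 0
      = p.coeff.sum (fun ab c => if ab.1 = N then AddMonoidAlgebra.single ab c else 0) := by
    rw [slX, Finsupp.sum_mul]
    congr 1
    funext ab c
    rw [ite_mul, zero_mul]
    congr 1
    rw [Xm, AddMonoidAlgebra.single_mul_single, mul_one]
    congr 1
    obtain ⟨a, b⟩ := ab
    rw [Prod.mk_add_mk, Prod.mk.injEq]
    omega
  rw [h1, rsX, ← Finsupp.sum_add]
  have h2 : ∀ (ab : ℤ×ℤ) (c : A),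
      ((if ab.1 = N then AddMonoidAlgebra.single ab c else 0)
        + (if ab.1 = N then 0 else AddMonoidAlgebra.single ab c))
      = AddMonoidAlgebra.single ab c := by
    intro ab c
    by_cases h : ab.1 = N <;> simp [h]
  have h4 : p.coeff.sum (fun (ab : ℤ×ℤ) (c : A) => AddMonoidAlgebra.single ab c)
      = p.coeff.sum (fun ab c => (if ab.1 = N then AddMonoidAlgebra.single ab c else 0)
        + (if ab.1 = N then 0 else AddMonoidAlgebra.single ab c)) :=
    Finsupp.sum_congr (fun ab _ => (h2 ab (p.coeff ab)).symm)
  conv_lhs => rw [← AddMonoidAlgebra.sum_coeff_single p]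
  rw [h4, Finsupp.sum_add]

lemma slX_supp {N s : ℤ} {p : Lau A} {xy : ℤ×ℤ} (h : xy ∈ (slX N s p).coeff.support) :
    xy.1 = N - s ∧ (N, xy.2) ∈ p.coeff.support := by
  classical
  rw [slX, AddMonoidAlgebra.coeff_finsuppSum] at h
  have h1 := Finsupp.support_sum h
  rw [Finset.mem_biUnion] at h1
  obtain ⟨ab, hab, h2⟩ := h1
  by_cases hc : ab.1 = N
  · rw [if_pos hc] at h2
    have h3 := Finsupp.support_single_subset h2
    rw [Finset.mem_singleton] at h3
    subst h3
    simp only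
    constructor
    · omega
    · have : ab = (N, ab.2) := by rw [Prod.mk.injEq]; exact ⟨hc, rfl⟩
      rwa [← this]
  · rw [if_neg hc] at h2
    simp at h2

lemma rsX_supp {N : ℤ} {p : Lau A} {xy : ℤ×ℤ} (h : xy ∈ (rsX N p).coeff.support) :
    xy.1 ≠ N ∧ xy ∈ p.coeff.support := by
  classical
  rw [rsX, AddMonoidAlgebra.coeff_finsuppSum] at h
  have h1 := Finsupp.support_sum h
  rw [Finset.mem_biUnion] at h1
  obtain ⟨ab, hab, h2⟩ := h1
  by_cases hc : ab.1 = N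
  · rw [if_pos hc] at h2; simp at h2
  · rw [if_neg hc] at h2
    have h3 := Finsupp.support_single_subset h2
    rw [Finset.mem_singleton] at h3
    subst h3
    exact ⟨hc, hab⟩

lemma div1 (m : ℕ) (hm : 1 ≤ m) (F fl : Lau A) (hF : F = Xm A (m:ℤ) 0 + fl)
    (hfl : ∀ ab ∈ fl.coeff.support, 0 ≤ ab.1 ∧ ab.1 ≤ (m:ℤ)-1 ∧ ab.2 = 0) (N : ℕ)
    (p : Lau A)
    (hp : ∀ ab ∈ p.coeff.support, 0 ≤ ab.1 ∧ ab.1 ≤ (N:ℤ) ∧ 0 ≤ ab.2 ∧ ab.2 ≤ (m:ℤ)-1) :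
    ∃ τ ζ, p = τ * F + ζ ∧ Res A m ζ := by
  classical
  induction N using Nat.strong_induction_on generalizing p with
  | _ N ih =>
  by_cases hN : (N:ℤ) ≤ (m:ℤ) - 1
  · exact ⟨0, p, by rw [zero_mul, zero_add], fun ab hab => by
      obtain ⟨h1, h2, h3, h4⟩ := hp ab hab; exact ⟨h1, le_trans h2 hN, h3, h4⟩⟩
  · have hNm : (m:ℤ) ≤ N := by omega
    have hN1 : 1 ≤ N := by omega
    set sl := slX (N:ℤ) (m:ℤ) p with hsl
    set p' := p - sl * F with hp'def
    have hsplit : p' = rsX (N:ℤ) p - sl * fl := by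
      have h3 : p - slX (N:ℤ) (m:ℤ) p * Xm A (m:ℤ) 0 = rsX (N:ℤ) p := by
        rw [sub_eq_iff_eq_add']
        exact slX_split (N:ℤ) (m:ℤ) p
      calc p' = (p - sl * Xm A (m:ℤ) 0) - sl * fl := by rw [hp'def, hF, mul_add]; abel
        _ = rsX (N:ℤ) p - sl * fl := by rw [hsl, h3]
    have hp'supp : ∀ ab ∈ p'.coeff.support,
        0 ≤ ab.1 ∧ ab.1 ≤ ((N-1 : ℕ):ℤ) ∧ 0 ≤ ab.2 ∧ ab.2 ≤ (m:ℤ)-1 := by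
      intro ab hab
      rw [hsplit] at hab
      rcases Finset.mem_union.mp (Finsupp.support_sub hab) with h | h
      · obtain ⟨hne, hmem⟩ := rsX_supp h
        obtain ⟨h1, h2, h3, h4⟩ := hp ab hmem
        exact ⟨h1, by omega, h3, h4⟩
      · have h2 := AddMonoidAlgebra.support_coeff_mul_subset sl fl h
        rw [Finset.mem_add] at h2
        obtain ⟨x, hx, y, hy, rfl⟩ := h2
        obtain ⟨hx1, hx2⟩ := slX_supp hx
        obtain ⟨hp1, hp2, hp3, hp4⟩ := hp _ hx2
        obtain ⟨hy1, hy2, hy3⟩ := hfl y hy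
        refine ⟨?_, ?_, ?_, ?_⟩
        · simp only [Prod.fst_add]; omega
        · simp only [Prod.fst_add]; omega
        · simp only [Prod.snd_add]; omega
        · simp only [Prod.snd_add]; omega
    obtain ⟨τ', ζ, hζ1, hζ2⟩ := ih (N-1) (by omega) p' hp'supp
    refine ⟨sl + τ', ζ, ?_, hζ2⟩
    rw [add_mul]
    have : p = sl * F + p' := by rw [hp'def]; abel
    rw [this, hζ1]
    abel

end Hx


-- ===== specialized layer =====
namespace Hx2
open Hx

def eB (m : ℕ) (j : ℕ) : Bv m :=
  ∑ t ∈ Finset.powersetCard j (Finset.univ : Finset (Fin m)), ∏ i ∈ t, vB m i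

def cfn (m : ℕ) (j : ℕ) : Bv m := (-1)^j * eB m j

def fv2B (m : ℕ) : Lau (Bv m) := ∏ i : Fin m, (Xm (Bv m) 0 1 - CC (Bv m) (vB m i))

def zelB (m : ℕ) : Lau (Bv m) :=
  CC (Bv m) (-(cfn m m)) +
    Xm (Bv m) 1 1 * ∑ j ∈ Finset.range (m-1), CC (Bv m) (cfn m j) * Hc (Bv m) (m-2-j)

def ZtB (m : ℕ) : Lau (Bv m) :=
  ∑ j ∈ Finset.range m, CC (Bv m) (cfn m j) * Xm (Bv m) ((m:ℤ) - (j:ℤ) - 1) 0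

def fl1 (m : ℕ) : Lau (Bv m) :=
  ∑ i ∈ Finset.range m, CC (Bv m) (cfn m (i+1)) * Xm (Bv m) ((m:ℤ) - ((i+1 : ℕ):ℤ)) 0

def fl2 (m : ℕ) : Lau (Bv m) :=
  ∑ i ∈ Finset.range m, CC (Bv m) (cfn m (i+1)) * Xm (Bv m) 0 ((m:ℤ) - ((i+1 : ℕ):ℤ))

variable {m : ℕ}

lemma swfv1 : sw (Bv m) (fv1B m) = fv2B m := by
  have h1 : fv1B m = ∏ i : Fin m, (Xm (Bv m) 1 0 - CC (Bv m) (vB m i)) := rfl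
  have h2 : fv2B m = ∏ i : Fin m, (Xm (Bv m) 0 1 - CC (Bv m) (vB m i)) := rfl
  rw [h1, h2, sw_prod]
  exact Finset.prod_congr rfl (fun i _ => by rw [sw_sub, sw_Xm, sw_CC])

lemma swfv2 : sw (Bv m) (fv2B m) = fv1B m := by
  rw [← swfv1, sw_sw]

lemma RQ1 : fv1B m
    = ∑ j ∈ Finset.range (m+1), CC (Bv m) (cfn m j) * Xm (Bv m) ((m:ℤ) - (j:ℤ)) 0 := by
  have h0 : fv1B m = ∏ i : Fin m, (Xm (Bv m) 1 0 - CC (Bv m) (vB m i)) := rfl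
  rw [h0, vieta (vB m) Finset.univ, Finset.sum_powerset]
  have hcard : (Finset.univ : Finset (Fin m)).card = m := by simp
  rw [hcard]
  refine Finset.sum_congr rfl (fun j hj => ?_)
  have h1 : ∀ t ∈ Finset.powersetCard j (Finset.univ : Finset (Fin m)),
      CC (Bv m) ((-1)^t.card * ∏ i ∈ t, vB m i) * Xm (Bv m) ((m:ℤ) - (t.card:ℤ)) 0
      = CC (Bv m) ((-1)^j * ∏ i ∈ t, vB m i) * Xm (Bv m) ((m:ℤ) - (j:ℤ)) 0 := by
    intro t ht
    rw [(Finset.mem_powersetCard.mp ht).2]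
  rw [Finset.sum_congr rfl h1, ← Finset.sum_mul]
  congr 1
  have h2 : cfn m j = ∑ t ∈ Finset.powersetCard j (Finset.univ : Finset (Fin m)),
      (-1)^j * ∏ i ∈ t, vB m i := by
    rw [cfn, eB, Finset.mul_sum]
  rw [h2]
  exact (map_sum (algebraMap (Bv m) (Lau (Bv m))) _ _).symm

lemma RQ2 : fv2B m
    = ∑ j ∈ Finset.range (m+1), CC (Bv m) (cfn m j) * Xm (Bv m) 0 ((m:ℤ) - (j:ℤ)) := by
  rw [← swfv1, RQ1, sw_sum]
  exact Finset.sum_congr rfl (fun j hj => by rw [sw_mul, sw_CC, sw_Xm])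

lemma ZID (hm : 1 ≤ m) :
    (Xm (Bv m) 0 1 - Xm (Bv m) 1 0) * zelB m
      = Xm (Bv m) 1 0 * fv2B m - Xm (Bv m) 0 1 * fv1B m := by
  rw [RQ1, RQ2, zelB]
  exact zel_id m hm (cfn m)

lemma swzel : sw (Bv m) (zelB m) = zelB m := by
  rw [zelB, sw_add, sw_CC, sw_mul, sw_Xm, sw_sum]
  congr 2
  exact Finset.sum_congr rfl (fun j _ => by rw [sw_mul, sw_CC, sw_Hc])

lemma cfn_zero : cfn m 0 = 1 := by
  rw [cfn, eB]
  simp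

lemma fv1top (hm : 1 ≤ m) : fv1B m = Xm (Bv m) (m:ℤ) 0 + fl1 m := by
  rw [RQ1, Finset.sum_range_succ']
  rw [add_comm, fl1]
  congr 1
  rw [cfn_zero, CC_one, one_mul]
  norm_num

lemma fv2top (hm : 1 ≤ m) : fv2B m = Xm (Bv m) 0 (m:ℤ) + fl2 m := by
  rw [RQ2, Finset.sum_range_succ']
  rw [add_comm, fl2]
  congr 1
  rw [cfn_zero, CC_one, one_mul]
  norm_num

lemma fv1Zt (hm : 1 ≤ m) :
    fv1B m * Xm (Bv m) (-1) 0 = ZtB m + CC (Bv m) (cfn m m) * Xm (Bv m) (-1) 0 := by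
  rw [RQ1, Finset.sum_mul, Finset.sum_range_succ]
  congr 1
  · rw [ZtB]
    refine Finset.sum_congr rfl (fun j hj => ?_)
    rw [mul_assoc, Xm_mul, show ((m:ℤ) - (j:ℤ) + -1) = (m:ℤ) - (j:ℤ) - 1 by ring]
    norm_num
  · rw [mul_assoc, Xm_mul, show ((m:ℤ) - ((m:ℕ):ℤ) + -1) = -1 by omega]
    norm_num

-- support lemmas
lemma supp_fl1 : ∀ ab ∈ (fl1 m).coeff.support,
    0 ≤ ab.1 ∧ ab.1 ≤ (m:ℤ)-1 ∧ ab.2 = 0 := by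
  intro ab h
  rw [fl1, AddMonoidAlgebra.coeff_sum] at h
  have h1 := Finsupp.support_finset_sum h
  rw [Finset.mem_biUnion] at h1
  obtain ⟨i, hi, h2⟩ := h1
  rw [Finset.mem_range] at hi
  have h3 := supp_CC_mul h2
  have h4 := Finsupp.support_single_subset h3
  rw [Finset.mem_singleton] at h4
  subst h4
  refine ⟨by simp <;> omega, by simp <;> omega, by simp <;> omega⟩

lemma supp_fl2 : ∀ ab ∈ (fl2 m).coeff.support,
    ab.1 = 0 ∧ 0 ≤ ab.2 ∧ ab.2 ≤ (m:ℤ)-1 := by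
  intro ab h
  rw [fl2, AddMonoidAlgebra.coeff_sum] at h
  have h1 := Finsupp.support_finset_sum h
  rw [Finset.mem_biUnion] at h1
  obtain ⟨i, hi, h2⟩ := h1
  rw [Finset.mem_range] at hi
  have h3 := supp_CC_mul h2
  have h4 := Finsupp.support_single_subset h3
  rw [Finset.mem_singleton] at h4
  subst h4
  refine ⟨by simp <;> omega, by simp <;> omega, by simp <;> omega⟩

lemma supp_Zt : ∀ ab ∈ (ZtB m).coeff.support,
    0 ≤ ab.1 ∧ ab.1 ≤ (m:ℤ)-1 ∧ ab.2 = 0 := by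
  intro ab h
  rw [ZtB, AddMonoidAlgebra.coeff_sum] at h
  have h1 := Finsupp.support_finset_sum h
  rw [Finset.mem_biUnion] at h1
  obtain ⟨j, hj, h2⟩ := h1
  rw [Finset.mem_range] at hj
  have h3 := supp_CC_mul h2
  have h4 := Finsupp.support_single_subset h3
  rw [Finset.mem_singleton] at h4
  subst h4
  refine ⟨by simp <;> omega, by simp <;> omega, by simp <;> omega⟩

lemma res_zel (hm : 1 ≤ m) : Res (Bv m) m (zelB m) := by
  rw [zelB]
  refine res_add ?_ ?_
  · intro ab h
    have h1 := Finsupp.support_single_subset h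
    rw [Finset.mem_singleton] at h1
    subst h1
    refine ⟨by simp <;> omega, by simp <;> omega, by simp <;> omega, by simp <;> omega⟩
  · intro ab h
    classical
    have h2 := AddMonoidAlgebra.support_coeff_mul_subset (Xm (Bv m) 1 1)
      (∑ j ∈ Finset.range (m-1), CC (Bv m) (cfn m j) * Hc (Bv m) (m-2-j)) h
    rw [Finset.mem_add] at h2
    obtain ⟨u, hu, v, hv, rfl⟩ := h2
    have hu1 := Finsupp.support_single_subset hu
    rw [Finset.mem_singleton] at hu1
    subst hu1
    rw [AddMonoidAlgebra.coeff_sum] at hv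
    have h3 := Finsupp.support_finset_sum hv
    rw [Finset.mem_biUnion] at h3
    obtain ⟨j, hj, h4⟩ := h3
    rw [Finset.mem_range] at hj
    have h5 := supp_CC_mul h4
    rw [Hc, AddMonoidAlgebra.coeff_sum] at h5
    have h6 := Finsupp.support_finset_sum h5
    rw [Finset.mem_biUnion] at h6
    obtain ⟨i, hi, h7⟩ := h6
    rw [Finset.mem_range] at hi
    have h8 := Finsupp.support_single_subset h7
    rw [Finset.mem_singleton] at h8
    subst h8
    refine ⟨by simp <;> omega, by simp <;> omega, by simp <;> omega, by simp <;> omega⟩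

-- units
lemma unit_q : ∃ u : Bv m, qB m * u = 1 := by
  refine ⟨algebraMap (Av m) (Bv m)
    (AddMonoidAlgebra.single ((-1:ℤ), (0 : Fin m → ℤ)) 1), ?_⟩
  rw [qB, ← map_mul]
  have h1 : qv m * AddMonoidAlgebra.single ((-1:ℤ), (0 : Fin m → ℤ)) 1 = 1 := by
    rw [show qv m = AddMonoidAlgebra.single ((1:ℤ), (0 : Fin m → ℤ)) 1 from rfl,
      AddMonoidAlgebra.single_mul_single, mul_one,
      show ((1:ℤ), (0 : Fin m → ℤ)) + ((-1:ℤ), (0 : Fin m → ℤ)) = 0 by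
        rw [Prod.mk_add_mk]; norm_num]
    rfl
  rw [h1, map_one]

lemma unit_q1 : ∃ u : Bv m, (qB m - 1) * u = 1 := by
  refine ⟨IsLocalization.Away.invSelf (S := Bv m) (qv m - 1), ?_⟩
  have h := IsLocalization.Away.mul_invSelf (S := Bv m) (qv m - 1)
  rw [map_sub, map_one] at h
  exact h

lemma unit_cm : ∃ u : Bv m, cfn m m * u = 1 := by
  have hps : Finset.powersetCard m (Finset.univ : Finset (Fin m)) = {Finset.univ} := by
    simpa using Finset.powersetCard_self (Finset.univ : Finset (Fin m))
  have he : eB m m = ∏ i : Fin m, vB m i := by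
    rw [eB, hps, Finset.sum_singleton]
  refine ⟨(-1)^m * ∏ i : Fin m, algebraMap (Av m) (Bv m)
    (AddMonoidAlgebra.single ((0:ℤ), -Pi.single i (1:ℤ)) 1), ?_⟩
  rw [cfn, he]
  have h1 : ∀ i : Fin m, vB m i * algebraMap (Av m) (Bv m)
      (AddMonoidAlgebra.single ((0:ℤ), -Pi.single i (1:ℤ)) 1) = 1 := by
    intro i
    rw [vB, ← map_mul]
    have hadd : ((0:ℤ), Pi.single i (1:ℤ)) + ((0:ℤ), -Pi.single i (1:ℤ))
        = (0 : ℤ × (Fin m → ℤ)) := by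
      rw [Prod.mk_add_mk]
      norm_num
    have h2 : vv m i * AddMonoidAlgebra.single ((0:ℤ), -Pi.single i (1:ℤ)) 1 = 1 := by
      rw [show vv m i = AddMonoidAlgebra.single ((0:ℤ), Pi.single i (1:ℤ)) 1 from rfl,
        AddMonoidAlgebra.single_mul_single, mul_one, hadd]
      rfl
    rw [h2, map_one]
  calc (-1)^m * (∏ i : Fin m, vB m i) * ((-1)^m * ∏ i : Fin m, algebraMap (Av m) (Bv m)
      (AddMonoidAlgebra.single ((0:ℤ), -Pi.single i (1:ℤ)) 1))
      = ((-1)^m * (-1)^m) * ∏ i : Fin m, (vB m i * algebraMap (Av m) (Bv m)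
        (AddMonoidAlgebra.single ((0:ℤ), -Pi.single i (1:ℤ)) 1)) := by
        rw [Finset.prod_mul_distrib]; ring
    _ = 1 := by
        rw [← pow_add, Finset.prod_congr rfl (fun i _ => h1 i), Finset.prod_const_one, mul_one]
        exact Even.neg_one_pow (α := Bv m) ⟨m, rfl⟩

end Hx2

open Hx Hx2 in
set_option maxHeartbeats 2000000 in
/- STATEMENT 15: over B = ℤ[q^±, v^±][(q-1)^{-1}], the image of the centre of
the affine Hecke algebra H₂^aff (= the symmetric Laurent polynomials S^W)
under the quotient map to the cyclotomic Hecke algebra 𝒦₂^v is the whole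
centre of 𝒦₂^v, i.e. every central element of 𝒦₂^v is the image of a
symmetric Laurent polynomial. -/
theorem stmt15 (m : ℕ)
    (K : Type) [Ring K] [Algebra (Bv m) K]
    (ι : Lau (Bv m) →ₐ[Bv m] K) (T : K)
    (hquad : (T - algebraMap (Bv m) K (qB m)) * (T + 1) = 0)
    (hTX : T * ι (Xm (Bv m) 1 0) * T = algebraMap (Bv m) K (qB m) * ι (Xm (Bv m) 0 1))
    (hcomm : ∀ f g : Lau (Bv m),
      g * (1 - Xm (Bv m) 1 0 * Xm (Bv m) 0 (-1)) = f - sw (Bv m) f →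
      T * ι f = ι (sw (Bv m) f) * T + algebraMap (Bv m) K (qB m - 1) * ι g)
    (hcyc : ι (fv1B m) = 0)
    (hfree : ∀ h : K, ∃! fg : Lau (Bv m) × Lau (Bv m),
      Res (Bv m) m fg.1 ∧ Res (Bv m) m fg.2 ∧ h = ι fg.1 + ι fg.2 * T) :
    ∀ x ∈ Set.center K, ∃ f : Lau (Bv m), sw (Bv m) f = f ∧ ι f = x := by
  classical
  intro x hx
  have hxc : ∀ a : K, x * a = a * x := fun a => (Set.mem_center_iff.mp hx).comm a
  rcases Nat.eq_zero_or_pos m with hm0 | hmpos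
  · -- m = 0 : K is trivial
    subst hm0
    obtain ⟨⟨a, b⟩, ⟨ha, hb, h1⟩, -⟩ := hfree 1
    have ha0 : a = 0 := by
      refine AddMonoidAlgebra.coeff_eq_zero.mp (Finsupp.support_eq_empty.mp (Finset.eq_empty_iff_forall_notMem.mpr ?_))
      intro ab hab
      obtain ⟨u1, u2, -, -⟩ := ha ab hab
      omega
    have hb0 : b = 0 := by
      refine AddMonoidAlgebra.coeff_eq_zero.mp (Finsupp.support_eq_empty.mp (Finset.eq_empty_iff_forall_notMem.mpr ?_))
      intro ab hab
      obtain ⟨u1, u2, -, -⟩ := hb ab hab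
      omega
    rw [ha0, hb0, map_zero, zero_mul, add_zero] at h1
    refine ⟨0, Hx.sw_zero, ?_⟩
    rw [map_zero]
    calc (0:K) = x * 0 := by rw [mul_zero]
      _ = x * 1 := by rw [← h1]
      _ = x := mul_one x
  have hm1 : 1 ≤ m := hmpos
  -- decomposition of x
  obtain ⟨⟨f, g⟩, ⟨hfR, hgR, hxdec⟩, -⟩ := hfree x
  simp only at hfR hgR hxdec
  -- uniqueness helper
  have uniq : ∀ a b a' b' : Lau (Bv m), Res (Bv m) m a → Res (Bv m) m b →
      Res (Bv m) m a' → Res (Bv m) m b' →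
      ι a + ι b * T = ι a' + ι b' * T → a = a' ∧ b = b' := by
    intro a b a' b' ha hb ha' hb' heq
    obtain ⟨y, -, hu⟩ := hfree (ι a + ι b * T)
    have e1 := hu (a, b) ⟨ha, hb, rfl⟩
    have e2 := hu (a', b') ⟨ha', hb', heq⟩
    have e3 := e1.trans e2.symm
    exact ⟨congrArg Prod.fst e3, congrArg Prod.snd e3⟩
  -- scalar helpers
  have hSc : ∀ (c : Bv m) (p : Lau (Bv m)),
      ι (CC (Bv m) c * p) = algebraMap (Bv m) K c * ι p := by
    intro c p
    rw [map_mul]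
    congr 1
    exact ι.commutes c
  have hscal : ∀ (c : Bv m) (y z : K),
      y * (algebraMap (Bv m) K c * z) = algebraMap (Bv m) K c * (y * z) := by
    intro c y z
    rw [← mul_assoc, ← Algebra.commutes c y, mul_assoc]
  have hcs : ∀ (c : Bv m) (y : K),
      y * algebraMap (Bv m) K c = algebraMap (Bv m) K c * y := by
    intro c y
    exact (Algebra.commutes c y).symm
  -- T squared
  have hT2 : T * T = algebraMap (Bv m) K (qB m - 1) * T + algebraMap (Bv m) K (qB m) := by
    have h0 := hquad
    rw [sub_mul, mul_add, mul_add, mul_one, mul_one, sub_eq_zero] at h0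
    have h1 : T * T = algebraMap (Bv m) K (qB m) * T + algebraMap (Bv m) K (qB m) - T := by
      rw [← h0]; abel
    rw [h1, map_sub, map_one, sub_mul, one_mul]
    abel
  -- monomial facts
  have hXa : Xm (Bv m) 1 0 * Xm (Bv m) 0 (-1) = Xm (Bv m) 1 (-1) := by
    rw [Hx.Xm_mul]; norm_num
  have hXb : Xm (Bv m) 0 1 * Xm (Bv m) 1 (-1) = Xm (Bv m) 1 0 := by
    rw [Hx.Xm_mul]; norm_num
  have hXc : Xm (Bv m) 1 0 * Xm (Bv m) (-1) 0 = 1 := by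
    rw [Hx.Xm_mul]; norm_num [Hx.Xm_zero]
  have hXf : Xm (Bv m) 0 1 * Xm (Bv m) 0 (-1) = 1 := by
    rw [Hx.Xm_mul]; norm_num [Hx.Xm_zero]
  have hXd : Xm (Bv m) 0 ((m:ℤ)-1) * Xm (Bv m) 0 1 = Xm (Bv m) 0 (m:ℤ) := by
    rw [Hx.Xm_mul]; norm_num
  have hXe : Xm (Bv m) ((m:ℤ)-1) 0 * Xm (Bv m) 1 0 = Xm (Bv m) (m:ℤ) 0 := by
    rw [Hx.Xm_mul]; norm_num
  -- commutation of T with X1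
  have hW1 : T * ι (Xm (Bv m) 1 0) = ι (Xm (Bv m) 0 1) * T
      - algebraMap (Bv m) K (qB m - 1) * ι (Xm (Bv m) 0 1) := by
    have hwit : (-(Xm (Bv m) 0 1)) * (1 - Xm (Bv m) 1 0 * Xm (Bv m) 0 (-1))
        = Xm (Bv m) 1 0 - sw (Bv m) (Xm (Bv m) 1 0) := by
      rw [Hx.sw_Xm, hXa, mul_sub, mul_one, neg_mul, hXb]
      abel
    have h := hcomm (Xm (Bv m) 1 0) (-(Xm (Bv m) 0 1)) hwit
    rw [Hx.sw_Xm, map_neg, mul_neg] at h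
    rw [h]
    abel
  -- the commutation relation (*) from centrality against X1
  have hstar : ι (g * Xm (Bv m) 0 1) * T
      = algebraMap (Bv m) K (qB m - 1) * ι (g * Xm (Bv m) 0 1)
        + ι (g * Xm (Bv m) 1 0) * T := by
    have hc := hxc (ι (Xm (Bv m) 1 0))
    rw [hxdec] at hc
    have e1 : (ι f + ι g * T) * ι (Xm (Bv m) 1 0)
        = ι (f * Xm (Bv m) 1 0) + (ι (g * Xm (Bv m) 0 1) * T
          - algebraMap (Bv m) K (qB m - 1) * ι (g * Xm (Bv m) 0 1)) := by
      calc (ι f + ι g * T) * ι (Xm (Bv m) 1 0)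
          = ι f * ι (Xm (Bv m) 1 0) + ι g * (T * ι (Xm (Bv m) 1 0)) := by
            rw [add_mul, mul_assoc]
        _ = ι f * ι (Xm (Bv m) 1 0) + (ι g * (ι (Xm (Bv m) 0 1) * T)
              - algebraMap (Bv m) K (qB m - 1) * (ι g * ι (Xm (Bv m) 0 1))) := by
            rw [hW1, mul_sub, hscal]
        _ = ι (f * Xm (Bv m) 1 0) + (ι (g * Xm (Bv m) 0 1) * T
              - algebraMap (Bv m) K (qB m - 1) * ι (g * Xm (Bv m) 0 1)) := by
            rw [← mul_assoc (ι g) (ι (Xm (Bv m) 0 1)) T, ← map_mul, ← map_mul]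
    have e2 : ι (Xm (Bv m) 1 0) * (ι f + ι g * T)
        = ι (f * Xm (Bv m) 1 0) + ι (g * Xm (Bv m) 1 0) * T := by
      rw [mul_add, ← mul_assoc, ← map_mul, ← map_mul, mul_comm (Xm (Bv m) 1 0) f,
        mul_comm (Xm (Bv m) 1 0) g]
    rw [e1, e2] at hc
    have h3 := add_left_cancel hc
    rw [sub_eq_iff_eq_add] at h3
    rw [h3]
    abel
  -- divided-difference identity for fv1
  have hD : (1 - Xm (Bv m) 1 (-1)) * zelB m = Xm (Bv m) 1 (-1) * fv2B m - fv1B m := by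
    have h1 := congrArg (fun y => y * Xm (Bv m) 0 (-1)) (ZID hm1)
    calc (1 - Xm (Bv m) 1 (-1)) * zelB m
        = ((Xm (Bv m) 0 1 - Xm (Bv m) 1 0) * zelB m) * Xm (Bv m) 0 (-1) := by
          rw [show ((Xm (Bv m) 0 1 - Xm (Bv m) 1 0) * zelB m) * Xm (Bv m) 0 (-1)
            = (Xm (Bv m) 0 1 * Xm (Bv m) 0 (-1) - Xm (Bv m) 1 0 * Xm (Bv m) 0 (-1)) * zelB m
            from by ring, hXf, hXa]
      _ = (Xm (Bv m) 1 0 * fv2B m - Xm (Bv m) 0 1 * fv1B m) * Xm (Bv m) 0 (-1) := h1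
      _ = Xm (Bv m) 1 (-1) * fv2B m - fv1B m := by
          rw [show (Xm (Bv m) 1 0 * fv2B m - Xm (Bv m) 0 1 * fv1B m) * Xm (Bv m) 0 (-1)
            = (Xm (Bv m) 1 0 * Xm (Bv m) 0 (-1)) * fv2B m
              - (Xm (Bv m) 0 1 * Xm (Bv m) 0 (-1)) * fv1B m from by ring, hXa, hXf, one_mul]
  have hR1 : ι (fv2B m) * T = algebraMap (Bv m) K (qB m - 1) * ι (fv2B m + zelB m) := by
    have hwit3 : (-(fv2B m + zelB m)) * (1 - Xm (Bv m) 1 0 * Xm (Bv m) 0 (-1))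
        = fv1B m - sw (Bv m) (fv1B m) := by
      rw [swfv1, hXa]
      linear_combination (-1 : Lau (Bv m)) * hD
    have h := hcomm (fv1B m) (-(fv2B m + zelB m)) hwit3
    rw [hcyc, mul_zero, swfv1, map_neg, mul_neg] at h
    rw [eq_comm, add_neg_eq_zero] at h
    exact h
  -- the reduction relation (ZEL')
  have hZEL : ∀ w : Lau (Bv m),
      algebraMap (Bv m) K (qB m) * ι (w * fv2B m)
        = algebraMap (Bv m) K (qB m - 1) * (ι (w * zelB m) * T) := by
    intro w
    have hA : ι (w * fv2B m) * T
        = algebraMap (Bv m) K (qB m - 1) * (ι (w * fv2B m) + ι (w * zelB m)) := by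
      calc ι (w * fv2B m) * T = ι w * (ι (fv2B m) * T) := by rw [map_mul, mul_assoc]
        _ = ι w * (algebraMap (Bv m) K (qB m - 1) * ι (fv2B m + zelB m)) := by rw [hR1]
        _ = algebraMap (Bv m) K (qB m - 1) * (ι w * ι (fv2B m + zelB m)) := hscal _ _ _
        _ = _ := by rw [← map_mul, mul_add, map_add]
    have hway1 : (ι (w * fv2B m) * T) * T
        = algebraMap (Bv m) K (qB m - 1) *
            ((algebraMap (Bv m) K (qB m - 1) * (ι (w * fv2B m) + ι (w * zelB m)))
              + ι (w * zelB m) * T) := by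
      calc (ι (w * fv2B m) * T) * T
          = (algebraMap (Bv m) K (qB m - 1) * (ι (w * fv2B m) + ι (w * zelB m))) * T := by
            rw [hA]
        _ = algebraMap (Bv m) K (qB m - 1) * ((ι (w * fv2B m) + ι (w * zelB m)) * T) := by
            rw [mul_assoc]
        _ = algebraMap (Bv m) K (qB m - 1) * (ι (w * fv2B m) * T + ι (w * zelB m) * T) := by
            rw [add_mul]
        _ = _ := by rw [hA]
    have hway2 : (ι (w * fv2B m) * T) * T
        = algebraMap (Bv m) K (qB m - 1) *
            (algebraMap (Bv m) K (qB m - 1) * (ι (w * fv2B m) + ι (w * zelB m)))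
          + algebraMap (Bv m) K (qB m) * ι (w * fv2B m) := by
      calc (ι (w * fv2B m) * T) * T = ι (w * fv2B m) * (T * T) := by rw [mul_assoc]
        _ = ι (w * fv2B m) * (algebraMap (Bv m) K (qB m - 1) * T)
              + ι (w * fv2B m) * algebraMap (Bv m) K (qB m) := by
            rw [hT2, mul_add]
        _ = algebraMap (Bv m) K (qB m - 1) * (ι (w * fv2B m) * T)
              + algebraMap (Bv m) K (qB m) * ι (w * fv2B m) := by
            rw [hscal, hcs]
        _ = _ := by rw [hA]
    have h9 := hway2.symm.trans hway1
    rw [mul_add (algebraMap (Bv m) K (qB m - 1))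
      (algebraMap (Bv m) K (qB m - 1) * (ι (w * fv2B m) + ι (w * zelB m)))
      (ι (w * zelB m) * T)] at h9
    exact add_left_cancel h9
  -- slices of g
  set sg := sw (Bv m) g with hsgdef
  have hsgR : Res (Bv m) m sg := Hx.res_sw hgR
  set gh := sw (Bv m) (Hx.slX ((m:ℤ)-1) ((m:ℤ)-1) sg) with hghdef
  set gl := sw (Bv m) (Hx.rsX ((m:ℤ)-1) sg) with hgldef
  have hsplit2 : g = gh * Xm (Bv m) 0 ((m:ℤ)-1) + gl := by
    have h0 := congrArg (sw (Bv m)) (Hx.slX_split ((m:ℤ)-1) ((m:ℤ)-1) sg)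
    rw [hsgdef, Hx.sw_sw, Hx.sw_add, Hx.sw_mul, Hx.sw_Xm] at h0
    exact h0
  have hgh_supp : ∀ ab ∈ gh.coeff.support, 0 ≤ ab.1 ∧ ab.1 ≤ (m:ℤ)-1 ∧ ab.2 = 0 := by
    intro ab h
    rw [hghdef] at h
    have h2 := Hx.supp_sw h
    obtain ⟨h3, h4⟩ := Hx.slX_supp h2
    have h5 := hsgR _ h4
    exact ⟨h5.2.2.1, h5.2.2.2, by omega⟩
  have hgl_supp : ∀ ab ∈ gl.coeff.support,
      0 ≤ ab.1 ∧ ab.1 ≤ (m:ℤ)-1 ∧ 0 ≤ ab.2 ∧ ab.2 ≤ (m:ℤ)-2 := by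
    intro ab h
    rw [hgldef] at h
    have h2 := Hx.supp_sw h
    obtain ⟨h3, h4⟩ := Hx.rsX_supp h2
    have h5 := hsgR _ h4
    exact ⟨h5.2.2.1, h5.2.2.2, h5.1, by omega⟩
  set gt := Hx.slX ((m:ℤ)-1) ((m:ℤ)-1) g with hgtdef
  set rs := Hx.rsX ((m:ℤ)-1) g with hrsdef
  have hsplit1 : g = gt * Xm (Bv m) ((m:ℤ)-1) 0 + rs := Hx.slX_split _ _ g
  have hgt_supp : ∀ ab ∈ gt.coeff.support, ab.1 = 0 ∧ 0 ≤ ab.2 ∧ ab.2 ≤ (m:ℤ)-1 := by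
    intro ab h
    rw [hgtdef] at h
    obtain ⟨h3, h4⟩ := Hx.slX_supp h
    have h5 := hgR _ h4
    exact ⟨by omega, h5.2.2.1, h5.2.2.2⟩
  have hrs_supp : ∀ ab ∈ rs.coeff.support,
      0 ≤ ab.1 ∧ ab.1 ≤ (m:ℤ)-2 ∧ 0 ≤ ab.2 ∧ ab.2 ≤ (m:ℤ)-1 := by
    intro ab h
    rw [hrsdef] at h
    obtain ⟨h3, h4⟩ := Hx.rsX_supp h
    have h5 := hgR _ h4
    exact ⟨h5.1, by omega, h5.2.2.1, h5.2.2.2⟩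
  -- remainders
  set p2 := gl * Xm (Bv m) 0 1 - gh * fl2 m with hp2def
  set p1 := rs * Xm (Bv m) 1 0 - gt * fl1 m with hp1def
  have hp2 : g * Xm (Bv m) 0 1 = gh * fv2B m + p2 := by
    rw [hp2def]
    linear_combination hsplit2 * Xm (Bv m) 0 1 + gh * hXd - gh * (fv2top hm1)
  have hp1 : g * Xm (Bv m) 1 0 = gt * fv1B m + p1 := by
    rw [hp1def]
    linear_combination hsplit1 * Xm (Bv m) 1 0 + gt * hXe - gt * (fv1top hm1)
  have hp2R : Res (Bv m) m p2 := by
    rw [hp2def]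
    refine Hx.res_sub ?_ ?_
    · intro ab h
      have h2 := AddMonoidAlgebra.support_coeff_mul_subset gl (Xm (Bv m) 0 1) h
      rw [Finset.mem_add] at h2
      obtain ⟨u, hu, v, hv, rfl⟩ := h2
      obtain ⟨h3, h4, h5, h6⟩ := hgl_supp u hu
      have h7 := Finsupp.support_single_subset hv
      rw [Finset.mem_singleton] at h7
      subst h7
      refine ⟨?_, ?_, ?_, ?_⟩ <;> simp <;> omega
    · intro ab h
      have h2 := AddMonoidAlgebra.support_coeff_mul_subset gh (fl2 m) h
      rw [Finset.mem_add] at h2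
      obtain ⟨u, hu, v, hv, rfl⟩ := h2
      obtain ⟨h3, h4, h5⟩ := hgh_supp u hu
      obtain ⟨h6, h7, h8⟩ := supp_fl2 v hv
      refine ⟨?_, ?_, ?_, ?_⟩ <;> simp only [Prod.fst_add, Prod.snd_add] <;> omega
  have hp1R : Res (Bv m) m p1 := by
    rw [hp1def]
    refine Hx.res_sub ?_ ?_
    · intro ab h
      have h2 := AddMonoidAlgebra.support_coeff_mul_subset rs (Xm (Bv m) 1 0) h
      rw [Finset.mem_add] at h2
      obtain ⟨u, hu, v, hv, rfl⟩ := h2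
      obtain ⟨h3, h4, h5, h6⟩ := hrs_supp u hu
      have h7 := Finsupp.support_single_subset hv
      rw [Finset.mem_singleton] at h7
      subst h7
      refine ⟨?_, ?_, ?_, ?_⟩ <;> simp <;> omega
    · intro ab h
      have h2 := AddMonoidAlgebra.support_coeff_mul_subset gt (fl1 m) h
      rw [Finset.mem_add] at h2
      obtain ⟨u, hu, v, hv, rfl⟩ := h2
      obtain ⟨h3, h4, h5⟩ := hgt_supp u hu
      obtain ⟨h6, h7, h8⟩ := supp_fl1 v hv
      refine ⟨?_, ?_, ?_, ?_⟩ <;> simp only [Prod.fst_add, Prod.snd_add] <;> omega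
  -- division of gh * zel by fv1
  have hsupp_ghzel : ∀ ab ∈ (gh * zelB m).coeff.support,
      0 ≤ ab.1 ∧ ab.1 ≤ ((2*m : ℕ):ℤ) ∧ 0 ≤ ab.2 ∧ ab.2 ≤ (m:ℤ)-1 := by
    intro ab h
    have h2 := AddMonoidAlgebra.support_coeff_mul_subset gh (zelB m) h
    rw [Finset.mem_add] at h2
    obtain ⟨u, hu, v, hv, rfl⟩ := h2
    obtain ⟨h3, h4, h5⟩ := hgh_supp u hu
    obtain ⟨h6, h7, h8, h9⟩ := res_zel hm1 v hv
    refine ⟨?_, ?_, ?_, ?_⟩ <;> simp only [Prod.fst_add, Prod.snd_add] <;> omega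
  obtain ⟨τ, ζ, hζ1, hζ2⟩ := Hx.div1 m hm1 (fv1B m) (fl1 m) (fv1top hm1) supp_fl1
    (2*m) (gh * zelB m) hsupp_ghzel
  -- basis extraction
  have hIζ : ι (gh * zelB m) = ι ζ := by
    rw [hζ1, map_add, map_mul, hcyc, mul_zero, zero_add]
  have hI1 : algebraMap (Bv m) K (qB m) * ι (g * Xm (Bv m) 0 1)
      = algebraMap (Bv m) K (qB m) * ι p2
        + algebraMap (Bv m) K (qB m - 1) * (ι ζ * T) := by
    rw [hp2, map_add, mul_add, add_comm, hZEL gh, hIζ, add_comm]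
  have hI2 : ι (g * Xm (Bv m) 1 0) = ι p1 := by
    rw [hp1, map_add, map_mul, hcyc, mul_zero, zero_add]
  have hE2 : algebraMap (Bv m) K (qB m) * (ι (g * Xm (Bv m) 0 1) * T)
      = algebraMap (Bv m) K (qB m) * (ι p2 * T)
        + algebraMap (Bv m) K (qB m - 1) * (algebraMap (Bv m) K (qB m - 1) * (ι ζ * T))
        + algebraMap (Bv m) K (qB m - 1) * (algebraMap (Bv m) K (qB m) * ι ζ) := by
    calc algebraMap (Bv m) K (qB m) * (ι (g * Xm (Bv m) 0 1) * T)
        = (algebraMap (Bv m) K (qB m) * ι (g * Xm (Bv m) 0 1)) * T := by rw [mul_assoc]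
      _ = (algebraMap (Bv m) K (qB m) * ι p2
            + algebraMap (Bv m) K (qB m - 1) * (ι ζ * T)) * T := by rw [hI1]
      _ = algebraMap (Bv m) K (qB m) * (ι p2 * T)
            + algebraMap (Bv m) K (qB m - 1) * (ι ζ * (T * T)) := by
          rw [add_mul, mul_assoc, mul_assoc, mul_assoc]
      _ = algebraMap (Bv m) K (qB m) * (ι p2 * T)
            + algebraMap (Bv m) K (qB m - 1)
              * (algebraMap (Bv m) K (qB m - 1) * (ι ζ * T)
                 + algebraMap (Bv m) K (qB m) * ι ζ) := by
          congr 1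
          rw [hT2, mul_add, hscal, hcs]
      _ = _ := by rw [mul_add, add_assoc]
  have hE3 : algebraMap (Bv m) K (qB m) *
        (algebraMap (Bv m) K (qB m - 1) * ι (g * Xm (Bv m) 0 1) + ι (g * Xm (Bv m) 1 0) * T)
      = algebraMap (Bv m) K (qB m - 1) * (algebraMap (Bv m) K (qB m) * ι p2)
        + algebraMap (Bv m) K (qB m - 1) * (algebraMap (Bv m) K (qB m - 1) * (ι ζ * T))
        + algebraMap (Bv m) K (qB m) * (ι p1 * T) := by
    rw [mul_add, hI2, hscal, hI1, mul_add, ← mul_assoc, add_assoc]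
  have hE4 := (hE2.symm.trans
      (congrArg (fun y => algebraMap (Bv m) K (qB m) * y) hstar)).trans hE3
  have hE5 : algebraMap (Bv m) K (qB m) * (ι p2 * T)
        + algebraMap (Bv m) K (qB m - 1) * (algebraMap (Bv m) K (qB m) * ι ζ)
      = algebraMap (Bv m) K (qB m - 1) * (algebraMap (Bv m) K (qB m) * ι p2)
        + algebraMap (Bv m) K (qB m) * (ι p1 * T) := by
    have h1 : (algebraMap (Bv m) K (qB m) * (ι p2 * T)
          + algebraMap (Bv m) K (qB m - 1) * (algebraMap (Bv m) K (qB m) * ι ζ))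
          + algebraMap (Bv m) K (qB m - 1) * (algebraMap (Bv m) K (qB m - 1) * (ι ζ * T))
        = (algebraMap (Bv m) K (qB m - 1) * (algebraMap (Bv m) K (qB m) * ι p2)
          + algebraMap (Bv m) K (qB m) * (ι p1 * T))
          + algebraMap (Bv m) K (qB m - 1) * (algebraMap (Bv m) K (qB m - 1) * (ι ζ * T)) := by
      calc _ = algebraMap (Bv m) K (qB m) * (ι p2 * T)
            + algebraMap (Bv m) K (qB m - 1) * (algebraMap (Bv m) K (qB m - 1) * (ι ζ * T))
            + algebraMap (Bv m) K (qB m - 1) * (algebraMap (Bv m) K (qB m) * ι ζ) := by abel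
        _ = _ := hE4
        _ = _ := by abel
    exact add_right_cancel h1
  -- convert to the ι-form and apply uniqueness
  have hKey : ι (CC (Bv m) ((qB m - 1) * qB m) * (ζ - p2))
        + ι (CC (Bv m) (qB m) * (p2 - p1)) * T
      = ι 0 + ι 0 * T := by
    rw [map_zero, zero_add, zero_mul]
    have ha : ι (CC (Bv m) ((qB m - 1) * qB m) * (ζ - p2))
        = algebraMap (Bv m) K (qB m - 1) * (algebraMap (Bv m) K (qB m) * ι ζ)
          - algebraMap (Bv m) K (qB m - 1) * (algebraMap (Bv m) K (qB m) * ι p2) := by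
      rw [hSc, map_sub, map_mul, mul_assoc, mul_sub, mul_sub]
    have hb : ι (CC (Bv m) (qB m) * (p2 - p1)) * T
        = algebraMap (Bv m) K (qB m) * (ι p2 * T)
          - algebraMap (Bv m) K (qB m) * (ι p1 * T) := by
      rw [hSc, map_sub, mul_sub, sub_mul, mul_assoc, mul_assoc]
    rw [ha, hb]
    calc _ = (algebraMap (Bv m) K (qB m) * (ι p2 * T)
          + algebraMap (Bv m) K (qB m - 1) * (algebraMap (Bv m) K (qB m) * ι ζ))
          - (algebraMap (Bv m) K (qB m - 1) * (algebraMap (Bv m) K (qB m) * ι p2)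
          + algebraMap (Bv m) K (qB m) * (ι p1 * T)) := by abel
      _ = 0 := sub_eq_zero.mpr hE5
  obtain ⟨hu1, hu2⟩ := uniq _ _ 0 0 (Hx.res_CC_mul (Hx.res_sub hζ2 hp2R))
    (Hx.res_CC_mul (Hx.res_sub hp2R hp1R)) Hx.res_zero Hx.res_zero hKey
  -- units
  obtain ⟨qi, hqi⟩ := unit_q (m := m)
  obtain ⟨q1i, hq1i⟩ := unit_q1 (m := m)
  obtain ⟨cmi, hcmi⟩ := unit_cm (m := m)
  have hcc : ∀ (c u : Bv m) (y : Lau (Bv m)), c * u = 1 → CC (Bv m) c * y = 0 → y = 0 := by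
    intro c u y hcu h
    have h2 := congrArg (fun z => CC (Bv m) u * z) h
    simp only [mul_zero] at h2
    rw [← mul_assoc, ← Hx.CC_mul, mul_comm u c, hcu, Hx.CC_one, one_mul] at h2
    exact h2
  have hζρ : ζ = p2 := by
    have h0 : ((qB m - 1) * qB m) * (q1i * qi) = 1 := by
      calc ((qB m - 1) * qB m) * (q1i * qi) = ((qB m - 1) * q1i) * (qB m * qi) := by ring
        _ = 1 := by rw [hq1i, hqi, one_mul]
    exact sub_eq_zero.mp (hcc _ _ _ h0 hu1)
  have hρπ : p2 = p1 := by
    exact sub_eq_zero.mp (hcc _ _ _ hqi hu2)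
  -- express ι g
  have hg1 : ι (g * Xm (Bv m) 1 0) = ι (gh * zelB m) := by
    rw [hI2, ← hρπ, ← hζρ, hIζ]
  have hg2 : ι g = ι (gh * zelB m * Xm (Bv m) (-1) 0) := by
    calc ι g = ι (g * Xm (Bv m) 1 0) * ι (Xm (Bv m) (-1) 0) := by
          rw [← map_mul, mul_assoc, hXc, mul_one]
      _ = _ := by rw [hg1, ← map_mul]
  have hXsub : Xm (Bv m) (-1) 0
      = CC (Bv m) cmi * (fv1B m * Xm (Bv m) (-1) 0 - ZtB m) := by
    have h0 := fv1Zt hm1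
    have h1 : CC (Bv m) (cfn m m) * Xm (Bv m) (-1) 0
        = fv1B m * Xm (Bv m) (-1) 0 - ZtB m := by
      rw [h0]; ring
    rw [← h1, ← mul_assoc, ← Hx.CC_mul, mul_comm cmi _, hcmi, Hx.CC_one, one_mul]
  set w0 := CC (Bv m) cmi * (gh * ZtB m) with hw0def
  have hg4 : ι g = - ι (w0 * zelB m) := by
    rw [hg2]
    calc ι (gh * zelB m * Xm (Bv m) (-1) 0)
        = ι ((CC (Bv m) cmi * (gh * zelB m * Xm (Bv m) (-1) 0)) * fv1B m)
          - ι (w0 * zelB m) := by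
          rw [← map_sub]
          congr 1
          conv_lhs => rw [hXsub]
          rw [hw0def]
          ring
      _ = - ι (w0 * zelB m) := by
          rw [map_mul, hcyc, mul_zero, zero_sub]
  have hZ8 : ι (w0 * zelB m) * T = ι (CC (Bv m) (q1i * qB m) * (w0 * fv2B m)) := by
    have h0 := hZEL w0
    have h1 : ι (CC (Bv m) (q1i * qB m) * (w0 * fv2B m)) = ι (w0 * zelB m) * T := by
      rw [hSc, map_mul, mul_assoc, h0, ← mul_assoc, ← map_mul, mul_comm q1i (qB m - 1),
        hq1i, map_one, one_mul]
    exact h1.symm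
  have hg6 : ι g * T = ι (-(CC (Bv m) (q1i * qB m) * w0) * fv2B m) := by
    rw [hg4, neg_mul, hZ8, ← map_neg]
    congr 1
    ring
  set Bg := -(CC (Bv m) (q1i * qB m) * w0) with hBgdef
  set Hz := Bg * fv2B m + sw (Bv m) Bg * fv1B m with hHzdef
  have hHz1 : ι Hz = ι g * T := by
    rw [hHzdef, map_add, map_mul ι (sw (Bv m) Bg) (fv1B m), hcyc, mul_zero, add_zero, hg6]
  have hHzsym : sw (Bv m) Hz = Hz := by
    rw [hHzdef, Hx.sw_add, Hx.sw_mul, Hx.sw_mul, Hx.sw_sw, swfv1, swfv2]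
    abel
  -- symmetry of f
  have hxf : ι f = x - ι Hz := by
    rw [hxdec, hHz1]; abel
  have hTHz : T * ι Hz = ι Hz * T := by
    have h := hcomm Hz 0 (by rw [zero_mul, hHzsym, sub_self])
    rw [map_zero, mul_zero, add_zero, hHzsym] at h
    exact h
  have hTf : ι f * T = T * ι f := by
    rw [hxf, sub_mul, mul_sub, hxc T, hTHz]
  have hddw : Hx.dd f * (1 - Xm (Bv m) 1 0 * Xm (Bv m) 0 (-1)) = f - sw (Bv m) f := by
    rw [hXa]
    exact Hx.dd_mul f
  have hdd := hcomm f (Hx.dd f) hddw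
  have hfe : ι 0 + ι f * T
      = ι (CC (Bv m) (qB m - 1) * Hx.dd f) + ι (sw (Bv m) f) * T := by
    rw [map_zero, zero_add, hTf, hdd, hSc]
    abel
  obtain ⟨-, he2⟩ := uniq 0 f (CC (Bv m) (qB m - 1) * Hx.dd f) (sw (Bv m) f)
    Hx.res_zero hfR (Hx.res_CC_mul (Hx.res_dd hfR)) (Hx.res_sw hfR) hfe
  refine ⟨f + Hz, ?_, ?_⟩
  · rw [Hx.sw_add, hHzsym, ← he2]
  · rw [map_add, hHz1, ← hxdec]
end
end

section
/- In the cyclotomic Hecke algebra $\mathcal{K}_2^{\mathbf v}$ over the integral domain $A$, an element $gT$ with $g \in R_m$ is central if and only if both $g$ and $X_1 g$ lie in $R_m^W$ (symmetric restricted polynomials). Hence $\mathcal{Z} \cap R_m T = MT$ where $M = \{g \in R_m^W : X_1 g \in R_m^W\}$. -/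
noncomputable section

variable (A : Type) [CommRing A]

section Basics
variable (A : Type) [CommRing A]

lemma Xm_mul (i j k l : ℤ) : Xm A i j * Xm A k l = Xm A (i+k) (j+l) := by
  simp [Xm, AddMonoidAlgebra.single_mul_single, Prod.mk_add_mk]

lemma Xm_zero : Xm A 0 0 = 1 := (AddMonoidAlgebra.one_def).symm

lemma CC_def (a : A) : CC A a = AddMonoidAlgebra.single 0 a := by
  simp [CC]

def swE : (ℤ × ℤ) ≃+ (ℤ × ℤ) := AddEquiv.prodComm

lemma sw_eq_domCongr (p : Lau A) :
    sw A p = AddMonoidAlgebra.domCongr ℤ A (swE) p := by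
  apply AddMonoidAlgebra.coeff_injective
  ext n
  simp [sw, swE, AddMonoidAlgebra.coeff_domCongr]

lemma sw_mul (p q : Lau A) : sw A (p * q) = sw A p * sw A q := by
  rw [sw_eq_domCongr, sw_eq_domCongr, sw_eq_domCongr, map_mul]

lemma sw_add (p q : Lau A) : sw A (p + q) = sw A p + sw A q := by
  rw [sw_eq_domCongr, sw_eq_domCongr, sw_eq_domCongr, map_add]

lemma sw_single (n : ℤ × ℤ) (a : A) :
    sw A (AddMonoidAlgebra.single n a) = AddMonoidAlgebra.single (n.2, n.1) a := by
  rw [sw_eq_domCongr, AddMonoidAlgebra.domCongr_single]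
  rfl

lemma sw_Xm (i j : ℤ) : sw A (Xm A i j) = Xm A j i := sw_single A (i,j) 1

lemma sw_one : sw A 1 = 1 := by
  rw [sw_eq_domCongr, map_one]

end Basics
section ResLemmas
variable (A : Type) [CommRing A] (m : ℕ)

lemma Res_zero : Res A m 0 := by intro ab h; simp at h

lemma Res_add {p q : Lau A} (hp : Res A m p) (hq : Res A m q) : Res A m (p + q) := by
  intro ab h
  rcases Finset.mem_union.mp (Finsupp.support_add (g₁ := p.coeff) (g₂ := q.coeff) h) with h' | h'
  · exact hp ab h'
  · exact hq ab h'

lemma Res_neg {p : Lau A} (hp : Res A m p) : Res A m (-p) := by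
  intro ab h
  rw [AddMonoidAlgebra.coeff_neg, Finsupp.support_neg] at h
  exact hp ab h

lemma Res_sw {p : Lau A} (hp : Res A m p) : Res A m (sw A p) := by
  intro ab h
  rw [Finsupp.mem_support_iff] at h
  have h2 : (ab.2, ab.1) ∈ p.coeff.support := by
    rw [Finsupp.mem_support_iff]
    exact h
  obtain ⟨h1, h2', h3, h4⟩ := hp _ h2
  exact ⟨h3, h4, h1, h2'⟩

lemma Res_CC_mul {p : Lau A} (a : A) (hp : Res A m p) : Res A m (CC A a * p) := by
  intro ab h
  rw [Finsupp.mem_support_iff, CC_def, AddMonoidAlgebra.coeff_single_mul_apply] at h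
  apply hp
  rw [Finsupp.mem_support_iff]
  intro hc
  rw [neg_zero, zero_add] at h
  exact h (by rw [hc, mul_zero])

lemma Res_smul {p : Lau A} (a : A) (hp : Res A m p) : Res A m (a • p) := by
  intro ab h
  exact hp ab (Finsupp.support_smul (b := a) (g := p.coeff) h)

lemma Res_sum {ι : Type*} (s : Finset ι) (f : ι → Lau A) (hf : ∀ i ∈ s, Res A m (f i)) :
    Res A m (∑ i ∈ s, f i) := by
  intro ab h
  rw [AddMonoidAlgebra.coeff_sum] at h
  have := Finsupp.support_finset_sum (s := s) (f := fun i => (f i).coeff) h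
  rw [Finset.mem_biUnion] at this
  obtain ⟨i, hi, hab⟩ := this
  exact hf i hi ab hab

lemma Res_single {n : ℤ × ℤ} (c : A) (h1 : 0 ≤ n.1) (h2 : n.1 ≤ (m:ℤ) - 1)
    (h3 : 0 ≤ n.2) (h4 : n.2 ≤ (m:ℤ) - 1) : Res A m (AddMonoidAlgebra.single n c) := by
  intro ab h
  rw [AddMonoidAlgebra.coeff_single] at h
  have := Finsupp.support_single_subset h
  simp at this
  subst this
  exact ⟨h1, h2, h3, h4⟩

end ResLemmas
section Hwit
variable (A : Type) [CommRing A]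

/-- Witness for division by `1 - X₁X₂⁻¹`. -/
def wAB (a b : ℤ) : Lau A :=
  if a ≤ b then ∑ i ∈ Finset.range (b - a).toNat, Xm A (a + i) (b - i)
  else -∑ i ∈ Finset.range (a - b).toNat, Xm A (b + i) (a - i)

lemma telescope (a b : ℤ) (n : ℕ) :
    (∑ i ∈ Finset.range n, Xm A (a + i) (b - i)) * (1 - Xm A 1 0 * Xm A 0 (-1)) =
      Xm A a b - Xm A (a + n) (b - n) := by
  rw [Finset.sum_mul]
  have key : ∀ i : ℕ, Xm A (a + i) (b - i) * (1 - Xm A 1 0 * Xm A 0 (-1)) =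
      Xm A (a + i) (b - i) - Xm A (a + (i + 1 : ℕ)) (b - (i + 1 : ℕ)) := by
    intro i
    rw [Xm_mul, mul_sub, mul_one, Xm_mul]
    congr 2 <;> push_cast <;> ring
  calc ∑ i ∈ Finset.range n, Xm A (a + i) (b - i) * (1 - Xm A 1 0 * Xm A 0 (-1))
      = ∑ i ∈ Finset.range n,
          ((fun i : ℕ => Xm A (a + i) (b - i)) i - (fun i : ℕ => Xm A (a + i) (b - i)) (i+1)) := by
        refine Finset.sum_congr rfl fun i _ => key i
    _ = Xm A a b - Xm A (a + n) (b - n) := by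
        rw [Finset.sum_range_sub' (fun i : ℕ => Xm A (a + i) (b - i)) n]
        norm_num

lemma wAB_spec (a b : ℤ) :
    wAB A a b * (1 - Xm A 1 0 * Xm A 0 (-1)) = Xm A a b - Xm A b a := by
  rw [wAB]
  split_ifs with h
  · rw [telescope]
    congr 2 <;> omega
  · rw [neg_mul, telescope]
    have h1 : b + ((a - b).toNat : ℤ) = a := by omega
    have h2 : a - ((a - b).toNat : ℤ) = b := by omega
    rw [h1, h2]
    ring

lemma wAB_res (m : ℕ) (a b : ℤ) (h1 : 0 ≤ a) (h2 : a ≤ (m:ℤ) - 1) (h3 : 0 ≤ b)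
    (h4 : b ≤ (m:ℤ) - 1) : Res A m (wAB A a b) := by
  have main : ∀ (u v : ℤ), 0 ≤ u → v ≤ (m:ℤ) - 1 → u ≤ v →
      Res A m (∑ i ∈ Finset.range (v - u).toNat, Xm A (u + i) (v - i)) := by
    intro u v hu hv huv
    apply Res_sum
    intro i hi
    rw [Finset.mem_range] at hi
    have hi' : (i:ℤ) < v - u := by omega
    apply Res_single
    · omega
    · omega
    · omega
    · omega
  rw [wAB]
  split_ifs with h
  · exact main a b h1 h4 h
  · exact Res_neg A m (main b a h3 h2 (by omega))

/-- `hwit p` satisfies `hwit p * (1 - X₁X₂⁻¹) = p - sw p`. -/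
def hwit (p : Lau A) : Lau A := p.coeff.sum fun n c => c • wAB A n.1 n.2

lemma hwit_zero : hwit A 0 = 0 := Finsupp.sum_zero_index

lemma hwit_add (p q : Lau A) : hwit A (p + q) = hwit A p + hwit A q := by
  rw [hwit, hwit, hwit, AddMonoidAlgebra.coeff_add]
  apply Finsupp.sum_add_index'
  · intro n; simp
  · intro n c d; rw [add_smul]

lemma hwit_single (n : ℤ × ℤ) (c : A) :
    hwit A (AddMonoidAlgebra.single n c) = c • wAB A n.1 n.2 := by
  rw [hwit, AddMonoidAlgebra.coeff_single]
  apply Finsupp.sum_single_index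
  simp

lemma smul_Xm (c : A) (i j : ℤ) :
    c • Xm A i j = AddMonoidAlgebra.single (i, j) c := by
  rw [Xm, AddMonoidAlgebra.smul_single]
  simp

lemma hwit_spec (p : Lau A) :
    hwit A p * (1 - Xm A 1 0 * Xm A 0 (-1)) = p - sw A p := by
  induction p using AddMonoidAlgebra.induction_linear with
  | zero => simp [hwit_zero, sw]
  | add f g hf hg =>
      rw [hwit_add, add_mul, hf, hg, sw_add]
      ring
  | single n c =>
      rw [hwit_single, smul_mul_assoc, wAB_spec, sw_single, smul_sub, smul_Xm, smul_Xm]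

lemma hwit_res (m : ℕ) {p : Lau A} (hp : Res A m p) : Res A m (hwit A p) := by
  rw [hwit]
  apply Res_sum
  intro n hn
  obtain ⟨h1, h2, h3, h4⟩ := hp n hn
  exact Res_smul A m _ (wAB_res A m n.1 n.2 h1 h2 h3 h4)

end Hwit
section Reduce
variable (m : ℕ)

lemma fv1_expand : ∃ p : Lau (Av m), fv1 m = Xm (Av m) m 0 + p ∧
    ∀ x ∈ p.coeff.support, 0 ≤ x.1 ∧ x.1 ≤ (m:ℤ) - 1 ∧ x.2 = 0 := by
  suffices H : ∀ s : Finset (Fin m), ∃ p : Lau (Av m),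
      ∏ i ∈ s, (Xm (Av m) 1 0 - CC (Av m) (vv m i)) = Xm (Av m) s.card 0 + p ∧
      ∀ x ∈ p.coeff.support, 0 ≤ x.1 ∧ x.1 ≤ (s.card:ℤ) - 1 ∧ x.2 = 0 by
    obtain ⟨p, hp, hps⟩ := H Finset.univ
    refine ⟨p, ?_, ?_⟩
    · rw [fv1, hp]
      congr 2
      simp
    · intro x hx
      have := hps x hx
      simpa using this
  intro s
  induction s using Finset.induction_on with
  | empty =>
      refine ⟨0, ?_, ?_⟩
      · simp [Xm_zero]
      · intro x hx; simp at hx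
  | @insert a s ha ih =>
      obtain ⟨p, hp, hps⟩ := ih
      set n := s.card with hn
      refine ⟨Xm (Av m) 1 0 * p - CC (Av m) (vv m a) * Xm (Av m) n 0
        - CC (Av m) (vv m a) * p, ?_, ?_⟩
      · rw [Finset.prod_insert ha, hp, Finset.card_insert_of_notMem ha]
        have : Xm (Av m) 1 0 * Xm (Av m) n 0 = Xm (Av m) (n+1) 0 := by
          rw [Xm_mul]; congr 1 <;> push_cast <;> ring
        rw [sub_mul, mul_add, mul_add, this]
        push_cast
        ring
      · intro x hx
        rw [Finsupp.mem_support_iff] at hx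
        have hco : (Xm (Av m) 1 0 * p - CC (Av m) (vv m a) * Xm (Av m) n 0
            - CC (Av m) (vv m a) * p).coeff x
            = (Xm (Av m) 1 0 * p).coeff x - (CC (Av m) (vv m a) * Xm (Av m) n 0).coeff x
              - (CC (Av m) (vv m a) * p).coeff x := by
          rw [AddMonoidAlgebra.coeff_sub, AddMonoidAlgebra.coeff_sub, Finsupp.sub_apply, Finsupp.sub_apply]
        rw [Finset.card_insert_of_notMem ha]
        by_contra hcon
        push_cast at hcon
        apply hx
        rw [hco]
        have e1 : (Xm (Av m) 1 0 * p).coeff x = p.coeff (x.1 - 1, x.2) := by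
          rw [Xm, AddMonoidAlgebra.coeff_single_mul_apply, one_mul]
          congr 1
          rw [Prod.ext_iff]
          constructor
          · simp; ring
          · simp
        have e2 : (CC (Av m) (vv m a) * Xm (Av m) n 0).coeff x = 0 ∨ x = ((n:ℤ), (0:ℤ)) := by
          rw [CC_def, Xm, AddMonoidAlgebra.single_mul_single]
          by_cases hxe : x = ((n:ℤ), (0:ℤ))
          · right; exact hxe
          · left
            rw [zero_add, mul_one, AddMonoidAlgebra.coeff_single, Finsupp.single_apply]
            simp [Ne.symm hxe]
        have e3 : (CC (Av m) (vv m a) * p).coeff x = vv m a * p.coeff x := by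
          rw [CC_def, AddMonoidAlgebra.coeff_single_mul_apply, neg_zero, zero_add]
        -- from hcon : ¬ (0 ≤ x.1 ∧ x.1 ≤ n + 1 - 1 ∧ x.2 = 0)
        have hx1 : p.coeff (x.1 - 1, x.2) = 0 := by
          by_cases hmem : (x.1 - 1, x.2) ∈ p.coeff.support
          · obtain ⟨a1, a2, a3⟩ := hps _ hmem
            exfalso; apply hcon
            constructor
            · omega
            constructor
            · omega
            · simpa using a3
          · rw [Finsupp.mem_support_iff, not_not] at hmem; exact hmem
        have hx2 : (CC (Av m) (vv m a) * Xm (Av m) n 0).coeff x = 0 := by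
          rcases e2 with h | h
          · exact h
          · exfalso; apply hcon
            rw [h]
            refine ⟨by positivity, by push_cast; omega, rfl⟩
        have hx3 : p.coeff x = 0 := by
          by_cases hmem : x ∈ p.coeff.support
          · obtain ⟨a1, a2, a3⟩ := hps _ hmem
            exfalso; exact hcon ⟨a1, by omega, a3⟩
          · rw [Finsupp.mem_support_iff, not_not] at hmem; exact hmem
        rw [e1, hx1, hx2, e3, hx3, mul_zero]
        ring

lemma reduce_single (n : ℤ × ℤ) (c : Av m) (h1 : 0 ≤ n.1) (h2 : n.1 ≤ (m:ℤ) - 1)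
    (h3 : 0 ≤ n.2) (h4 : n.2 ≤ (m:ℤ) - 1) :
    ∃ rs : Lau (Av m) × Lau (Av m), Res (Av m) m rs.1 ∧
      Xm (Av m) 1 0 * AddMonoidAlgebra.single n c = rs.1 + fv1 m * rs.2 := by
  obtain ⟨p, hp, hps⟩ := fv1_expand m
  have hXsingle : Xm (Av m) 1 0 * AddMonoidAlgebra.single n c
      = AddMonoidAlgebra.single (n.1 + 1, n.2) c := by
    rw [Xm, AddMonoidAlgebra.single_mul_single, one_mul]
    congr 1
    ext <;> simp <;> ring
  by_cases hcase : n.1 = (m:ℤ) - 1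
  · refine ⟨⟨-(p * AddMonoidAlgebra.single ((0:ℤ), n.2) c),
      AddMonoidAlgebra.single ((0:ℤ), n.2) c⟩, ?_, ?_⟩
    · apply Res_neg
      intro x hx
      rw [Finsupp.mem_support_iff, AddMonoidAlgebra.coeff_mul_single_apply, ← sub_eq_add_neg] at hx
      have hmem : (x - ((0:ℤ), n.2)) ∈ p.coeff.support := by
        rw [Finsupp.mem_support_iff]
        intro hz
        exact hx (by rw [hz, zero_mul])
      obtain ⟨a1, a2, a3⟩ := hps _ hmem
      have b1 : x.1 - 0 = (x - ((0:ℤ), n.2)).1 := rfl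
      have b2 : x.2 - n.2 = (x - ((0:ℤ), n.2)).2 := rfl
      constructor
      · omega
      constructor
      · omega
      constructor
      · omega
      · omega
    · rw [hXsingle, hp]
      have : Xm (Av m) (m:ℤ) 0 * AddMonoidAlgebra.single ((0:ℤ), n.2) c
          = AddMonoidAlgebra.single (n.1 + 1, n.2) c := by
        rw [Xm, AddMonoidAlgebra.single_mul_single, one_mul]
        congr 1
        ext <;> simp <;> omega
      rw [add_mul, this]
      ring
  · refine ⟨⟨AddMonoidAlgebra.single (n.1 + 1, n.2) c, 0⟩, ?_, ?_⟩
    · exact Res_single _ m c (by omega) (by omega) h3 h4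
    · rw [hXsingle, mul_zero, add_zero]

lemma reduce {g : Lau (Av m)} (hg : Res (Av m) m g) :
    ∃ r s : Lau (Av m), Res (Av m) m r ∧ Xm (Av m) 1 0 * g = r + fv1 m * s := by
  have key : ∀ x ∈ g.coeff.support, ∃ rs : Lau (Av m) × Lau (Av m), Res (Av m) m rs.1 ∧
      Xm (Av m) 1 0 * AddMonoidAlgebra.single x (g.coeff x) = rs.1 + fv1 m * rs.2 := by
    intro x hx
    obtain ⟨h1, h2, h3, h4⟩ := hg x hx
    exact reduce_single m x (g.coeff x) h1 h2 h3 h4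
  choose! RS hRes heq using key
  refine ⟨∑ x ∈ g.coeff.support, (RS x).1, ∑ x ∈ g.coeff.support, (RS x).2, ?_, ?_⟩
  · exact Res_sum _ m _ _ fun x hx => hRes x hx
  · have hgdecomp : g = ∑ x ∈ g.coeff.support, AddMonoidAlgebra.single x (g.coeff x) := by
      conv_lhs => rw [← AddMonoidAlgebra.sum_coeff_single g]
      rfl
    conv_lhs => rw [hgdecomp]
    rw [Finset.mul_sum, Finset.mul_sum]
    rw [← Finset.sum_add_distrib]
    exact Finset.sum_congr rfl fun x hx => heq x hx

end Reduce

/- STATEMENT 18: in 𝒦₂^v, an element gT with g ∈ R_m is central if and only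
if both g and X₁g lie in R_m^W; hence 𝒵 ∩ R_m T = M T with
M = {g ∈ R_m^W : X₁ g ∈ R_m^W}. -/
theorem stmt18 (m : ℕ)
    (K : Type) [Ring K] [Algebra (Av m) K]
    (ι : Lau (Av m) →ₐ[Av m] K) (T : K)
    (hquad : (T - algebraMap (Av m) K (qv m)) * (T + 1) = 0)
    (hTX : T * ι (Xm (Av m) 1 0) * T = algebraMap (Av m) K (qv m) * ι (Xm (Av m) 0 1))
    (hcomm : ∀ f g : Lau (Av m),
      g * (1 - Xm (Av m) 1 0 * Xm (Av m) 0 (-1)) = f - sw (Av m) f →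
      T * ι f = ι (sw (Av m) f) * T + algebraMap (Av m) K (qv m - 1) * ι g)
    (hcyc : ι (fv1 m) = 0)
    (hfree : ∀ h : K, ∃! fg : Lau (Av m) × Lau (Av m),
      Res (Av m) m fg.1 ∧ Res (Av m) m fg.2 ∧ h = ι fg.1 + ι fg.2 * T) :
    ∀ g : Lau (Av m), Res (Av m) m g →
      (ι g * T ∈ Set.center K ↔
        (sw (Av m) g = g ∧
          ∃ g' : Lau (Av m), sw (Av m) g' = g' ∧ ι g' = ι (Xm (Av m) 1 0 * g))) := by
  intro g hg
  set Q : Av m → K := ⇑(algebraMap (Av m) K) with hQdef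
  set X1 : Lau (Av m) := Xm (Av m) 1 0 with hX1def
  set X2 : Lau (Av m) := Xm (Av m) 0 1 with hX2def
  set G : K := ι g * T with hGdef
  -- scalar facts
  have hQc : ∀ (a : Av m) (x : K), Q a * x = x * Q a := fun a x => Algebra.commutes a x
  have hιCC : ∀ (a : Av m) (p : Lau (Av m)), ι (CC (Av m) a * p) = Q a * ι p := by
    intro a p
    rw [map_mul]
    congr 1
    exact ι.commutes a
  -- quadratic relation
  have hT2 : T * T = Q (qv m - 1) * T + Q (qv m) := by
    have h2 : T * T - (Q (qv m - 1) * T + Q (qv m)) = (T - Q (qv m)) * (T + 1) := by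
      rw [hQdef, map_sub, map_one]
      noncomm_ring
    rw [← sub_eq_zero, h2, hquad]
  -- standard form lemma
  have hform : ∀ (a b : Av m) (p : Lau (Av m)),
      ι p * (Q a * T + Q b) = ι (CC (Av m) b * p) + ι (CC (Av m) a * p) * T := by
    intro a b p
    rw [hιCC, hιCC, mul_add, ← mul_assoc, ← hQc a (ι p), ← hQc b (ι p)]
    exact add_comm _ _
  -- commutation with symmetric elements
  have hc_sym : ∀ p : Lau (Av m), sw (Av m) p = p → T * ι p = ι p * T := by
    intro p hp
    have h := hcomm p 0 (by rw [zero_mul, hp, sub_self])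
    rw [hp, map_zero, mul_zero, add_zero] at h
    exact h
  -- commutation with X1 * p for symmetric p
  have hc_X1p : ∀ p : Lau (Av m), sw (Av m) p = p →
      T * ι (X1 * p) = ι (X2 * p) * T - Q (qv m - 1) * ι (X2 * p) := by
    intro p hp
    have hXa : X2 * (X1 * Xm (Av m) 0 (-1)) = X1 := by
      rw [hX1def, hX2def, Xm_mul, Xm_mul]
      norm_num
    have hsw : sw (Av m) (X1 * p) = X2 * p := by
      rw [sw_mul, hp, hX1def, sw_Xm, hX2def]
    have wid : (-(X2 * p)) * (1 - Xm (Av m) 1 0 * Xm (Av m) 0 (-1))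
        = X1 * p - sw (Av m) (X1 * p) := by
      rw [hsw]
      calc (-(X2 * p)) * (1 - Xm (Av m) 1 0 * Xm (Av m) 0 (-1))
          = (X2 * (X1 * Xm (Av m) 0 (-1))) * p - X2 * p := by rw [← hX1def]; ring
        _ = X1 * p - X2 * p := by rw [hXa]
    have h := hcomm (X1 * p) (-(X2 * p)) wid
    rw [hsw, map_neg, mul_neg, ← sub_eq_add_neg] at h
    exact h
  -- commutation with X2 * p for symmetric p
  have hc_X2p : ∀ p : Lau (Av m), sw (Av m) p = p →
      T * ι (X2 * p) = ι (X1 * p) * T + Q (qv m - 1) * ι (X2 * p) := by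
    intro p hp
    have hXa : X2 * (X1 * Xm (Av m) 0 (-1)) = X1 := by
      rw [hX1def, hX2def, Xm_mul, Xm_mul]
      norm_num
    have hsw : sw (Av m) (X2 * p) = X1 * p := by
      rw [sw_mul, hp, hX2def, sw_Xm, ← hX1def]
    have wid : (X2 * p) * (1 - Xm (Av m) 1 0 * Xm (Av m) 0 (-1))
        = X2 * p - sw (Av m) (X2 * p) := by
      rw [hsw]
      calc (X2 * p) * (1 - Xm (Av m) 1 0 * Xm (Av m) 0 (-1))
          = X2 * p - (X2 * (X1 * Xm (Av m) 0 (-1))) * p := by rw [← hX1def]; ring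
        _ = X2 * p - X1 * p := by rw [hXa]
    have h := hcomm (X2 * p) (X2 * p) wid
    rw [hsw] at h
    exact h
  -- T * ι X1 and T * ι X2
  have hTX1 : T * ι X1 = ι X2 * T - Q (qv m - 1) * ι X2 := by
    have h := hc_X1p 1 (sw_one _)
    rw [mul_one, mul_one] at h
    exact h
  have hTX2 : T * ι X2 = ι X1 * T + Q (qv m - 1) * ι X2 := by
    have h := hc_X2p 1 (sw_one _)
    rw [mul_one, mul_one] at h
    exact h
  -- cancellation of q
  have hqcancel : ∀ x y : Lau (Av m), CC (Av m) (qv m) * x = CC (Av m) (qv m) * y → x = y := by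
    intro x y hxy
    have hinv : (AddMonoidAlgebra.single ((-1:ℤ), (0 : Fin m → ℤ)) (1:ℤ) : Av m) * qv m = 1 := by
      rw [qv, AddMonoidAlgebra.single_mul_single]
      have : ((-1:ℤ), (0 : Fin m → ℤ)) + (1, 0) = 0 := by
        rw [Prod.ext_iff]
        constructor <;> simp
      rw [this, one_mul]
      exact (AddMonoidAlgebra.one_def).symm
    set qi : Av m := AddMonoidAlgebra.single ((-1:ℤ), (0 : Fin m → ℤ)) (1:ℤ)
    have hCC1 : CC (Av m) qi * CC (Av m) (qv m) = 1 := by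
      simp only [CC, ← map_mul, hinv, map_one]
    have h2 := congrArg (fun z => CC (Av m) qi * z) hxy
    rw [← mul_assoc, ← mul_assoc, hCC1, one_mul, one_mul] at h2
    exact h2
  constructor
  · -- forward direction
    intro hcent
    have hcc := Semigroup.mem_center_iff.mp hcent
    -- Step A: sw g = g
    have hc_g := hcomm g (hwit (Av m) g) (hwit_spec (Av m) g)
    have E1 : T * G = ι (CC (Av m) (qv m) * sw (Av m) g)
        + ι (CC (Av m) (qv m - 1) * (sw (Av m) g + hwit (Av m) g)) * T := by
      calc T * G = (T * ι g) * T := by rw [hGdef, mul_assoc]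
        _ = (ι (sw (Av m) g) * T + Q (qv m - 1) * ι (hwit (Av m) g)) * T := by rw [hc_g]
        _ = ι (sw (Av m) g) * (T * T) + Q (qv m - 1) * (ι (hwit (Av m) g) * T) := by
            rw [add_mul, mul_assoc, mul_assoc]
        _ = ι (sw (Av m) g) * (Q (qv m - 1) * T + Q (qv m))
            + Q (qv m - 1) * (ι (hwit (Av m) g) * T) := by rw [hT2]
        _ = ι (CC (Av m) (qv m) * sw (Av m) g) + ι (CC (Av m) (qv m - 1) * sw (Av m) g) * T
            + ι (CC (Av m) (qv m - 1) * hwit (Av m) g) * T := by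
            rw [hform]
            simp only [hιCC, mul_assoc]
        _ = _ := by
            rw [mul_add (CC (Av m) (qv m - 1)), map_add, add_mul, add_assoc]
    have E2 : G * T = ι (CC (Av m) (qv m) * g) + ι (CC (Av m) (qv m - 1) * g) * T := by
      rw [hGdef, mul_assoc, hT2, hform]
    have hu := (hfree (G * T)).unique
      (y₁ := (CC (Av m) (qv m) * sw (Av m) g, CC (Av m) (qv m - 1) * (sw (Av m) g + hwit (Av m) g)))
      (y₂ := (CC (Av m) (qv m) * g, CC (Av m) (qv m - 1) * g))
      ⟨Res_CC_mul _ m _ (Res_sw _ m hg), Res_CC_mul _ m _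
          (Res_add _ m (Res_sw _ m hg) (hwit_res _ m hg)),
        by rw [← E1, hcc T]⟩
      ⟨Res_CC_mul _ m _ hg, Res_CC_mul _ m _ hg, E2⟩
    have hswg : sw (Av m) g = g := hqcancel _ _ (congrArg Prod.fst hu)
    refine ⟨hswg, ?_⟩
    -- Step B: X1 * g is symmetric modulo the kernel
    have hX1comm := hcc (ι X1)
    have hGX1 : G * ι X1 = ι (X2 * g) * T - Q (qv m - 1) * ι (X2 * g) := by
      calc G * ι X1 = ι g * (T * ι X1) := by rw [hGdef, mul_assoc]
        _ = ι g * (ι X2 * T - Q (qv m - 1) * ι X2) := by rw [hTX1]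
        _ = ι (g * X2) * T - Q (qv m - 1) * ι (g * X2) := by
            rw [mul_sub, ← mul_assoc, ← map_mul, ← mul_assoc, ← hQc (qv m - 1) (ι g),
              mul_assoc (Q (qv m - 1)), ← map_mul]
        _ = _ := by rw [mul_comm g X2]
    have hX1G : ι X1 * G = ι (X1 * g) * T := by
      rw [hGdef, ← mul_assoc, ← map_mul]
    have R : ι (X1 * g) * T = ι (X2 * g) * T - Q (qv m - 1) * ι (X2 * g) := by
      rw [← hX1G, hX1comm]
      exact hGX1
    have hTfix : T * ι (X1 * g) = ι (X1 * g) * T := by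
      rw [hc_X1p g hswg, ← R]
    obtain ⟨r, s, hr, hred⟩ := reduce m hg
    have hιr : ι (X1 * g) = ι r := by
      rw [hX1def, hred, map_add, map_mul, hcyc, zero_mul, add_zero]
    have hTr : T * ι r = ι r * T := by rw [← hιr]; exact hTfix
    have hc_r := hcomm r (hwit (Av m) r) (hwit_spec (Av m) r)
    have hu2 := (hfree (ι r * T)).unique
      (y₁ := (CC (Av m) (qv m - 1) * hwit (Av m) r, sw (Av m) r))
      (y₂ := (0, r))
      ⟨Res_CC_mul _ m _ (hwit_res _ m hr), Res_sw _ m hr, by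
        rw [hιCC, ← hTr, hc_r, add_comm]⟩
      ⟨Res_zero _ m, hr, by rw [map_zero, zero_add]⟩
    have hswr : sw (Av m) r = r := congrArg Prod.snd hu2
    exact ⟨r, hswr, hιr.symm⟩
  · -- backward direction
    rintro ⟨hswg, g', hswg', hg'ι⟩
    have hTg : T * ι g = ι g * T := hc_sym g hswg
    have hGT : G * T = T * G := by
      rw [hGdef, ← mul_assoc, hTg]
    have hTfix : T * ι (X1 * g) = ι (X1 * g) * T := by
      rw [← hg'ι, hc_sym g' hswg', hg'ι]
    have Rmain : ι (X1 * g) * T = ι (X2 * g) * T - Q (qv m - 1) * ι (X2 * g) := by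
      rw [← hTfix, hc_X1p g hswg]
    have hX1c : G * ι X1 = ι X1 * G := by
      calc G * ι X1 = ι g * (T * ι X1) := by rw [hGdef, mul_assoc]
        _ = ι g * (ι X2 * T - Q (qv m - 1) * ι X2) := by rw [hTX1]
        _ = ι (X2 * g) * T - Q (qv m - 1) * ι (X2 * g) := by
            rw [mul_sub, ← mul_assoc, ← map_mul, ← mul_assoc, ← hQc (qv m - 1) (ι g),
              mul_assoc (Q (qv m - 1)), ← map_mul, mul_comm g X2]
        _ = ι (X1 * g) * T := Rmain.symm
        _ = ι X1 * G := by rw [hGdef, ← mul_assoc, ← map_mul]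
    have hX2c : G * ι X2 = ι X2 * G := by
      calc G * ι X2 = ι g * (T * ι X2) := by rw [hGdef, mul_assoc]
        _ = ι g * (ι X1 * T + Q (qv m - 1) * ι X2) := by rw [hTX2]
        _ = ι (X1 * g) * T + Q (qv m - 1) * ι (X2 * g) := by
            rw [mul_add, ← mul_assoc, ← map_mul, ← mul_assoc, ← hQc (qv m - 1) (ι g),
              mul_assoc (Q (qv m - 1)), ← map_mul, mul_comm g X2, mul_comm g X1]
        _ = ι (X2 * g) * T := by rw [Rmain]; abel
        _ = ι X2 * G := by rw [hGdef, ← mul_assoc, ← map_mul]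
    -- inverse trick
    have hinvcomm : ∀ x y : K, x * y = 1 → y * x = 1 → G * x = x * G → G * y = y * G := by
      intro x y h1 h2 h3
      calc G * y = (y * x) * (G * y) := by rw [h2, one_mul]
        _ = y * ((x * G) * y) := by rw [mul_assoc, ← mul_assoc x G y]
        _ = y * ((G * x) * y) := by rw [h3]
        _ = (y * G) * (x * y) := by rw [mul_assoc G x y, ← mul_assoc]
        _ = y * G := by rw [h1, mul_one]
    have hXprod : ∀ i j k l : ℤ, ι (Xm (Av m) i j) * ι (Xm (Av m) k l)
        = ι (Xm (Av m) (i+k) (j+l)) := by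
      intro i j k l
      rw [← map_mul, Xm_mul]
    have hX00 : ι (Xm (Av m) 0 0) = 1 := by rw [Xm_zero, map_one]
    have hpow1 : ∀ i : ℤ, G * ι (Xm (Av m) i 0) = ι (Xm (Av m) i 0) * G := by
      have hbinv : G * ι (Xm (Av m) (-1) 0) = ι (Xm (Av m) (-1) 0) * G := by
        apply hinvcomm (ι X1)
        · rw [hX1def, hXprod]; norm_num [hX00]
        · rw [hX1def, hXprod]; norm_num [hX00]
        · exact hX1c
      intro i
      induction i using Int.induction_on with
      | zero => rw [hX00, mul_one, one_mul]
      | succ n ih =>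
          have : (Xm (Av m) (n+1) 0 : Lau (Av m)) = Xm (Av m) n 0 * Xm (Av m) 1 0 := by
            rw [Xm_mul]; norm_num
          rw [this, map_mul, ← mul_assoc, ih, mul_assoc, ← hX1def, hX1c, ← mul_assoc]
      | pred n ih =>
          have e : (-(n:ℤ)) + (-1) = -(n:ℤ) - 1 := by ring
          have : (Xm (Av m) (-(n:ℤ)-1) 0 : Lau (Av m))
              = Xm (Av m) (-(n:ℤ)) 0 * Xm (Av m) (-1) 0 := by
            rw [Xm_mul, e, add_zero]
          rw [this, map_mul, ← mul_assoc, ih, mul_assoc, hbinv, ← mul_assoc]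
    have hpow2 : ∀ j : ℤ, G * ι (Xm (Av m) 0 j) = ι (Xm (Av m) 0 j) * G := by
      have hbinv : G * ι (Xm (Av m) 0 (-1)) = ι (Xm (Av m) 0 (-1)) * G := by
        apply hinvcomm (ι X2)
        · rw [hX2def, hXprod]; norm_num [hX00]
        · rw [hX2def, hXprod]; norm_num [hX00]
        · exact hX2c
      intro j
      induction j using Int.induction_on with
      | zero => rw [hX00, mul_one, one_mul]
      | succ n ih =>
          have : (Xm (Av m) 0 (n+1) : Lau (Av m)) = Xm (Av m) 0 n * Xm (Av m) 0 1 := by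
            rw [Xm_mul]; norm_num
          rw [this, map_mul, ← mul_assoc, ih, mul_assoc, ← hX2def, hX2c, ← mul_assoc]
      | pred n ih =>
          have e : (-(n:ℤ)) + (-1) = -(n:ℤ) - 1 := by ring
          have : (Xm (Av m) 0 (-(n:ℤ)-1) : Lau (Av m))
              = Xm (Av m) 0 (-(n:ℤ)) * Xm (Av m) 0 (-1) := by
            rw [Xm_mul, e, add_zero]
          rw [this, map_mul, ← mul_assoc, ih, mul_assoc, hbinv, ← mul_assoc]
    have hsingle : ∀ (n : ℤ × ℤ) (c : Av m),
        G * ι (AddMonoidAlgebra.single n c) = ι (AddMonoidAlgebra.single n c) * G := by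
      intro n c
      have hdec : (AddMonoidAlgebra.single n c : Lau (Av m))
          = CC (Av m) c * (Xm (Av m) n.1 0 * Xm (Av m) 0 n.2) := by
        rw [Xm_mul, CC_def, Xm, AddMonoidAlgebra.single_mul_single, mul_one]
        congr 1
        rw [Prod.ext_iff]
        constructor <;> simp
      rw [hdec, hιCC, map_mul]
      calc G * (Q c * (ι (Xm (Av m) n.1 0) * ι (Xm (Av m) 0 n.2)))
          = Q c * ((G * ι (Xm (Av m) n.1 0)) * ι (Xm (Av m) 0 n.2)) := by
            rw [← mul_assoc, ← hQc c G, mul_assoc, ← mul_assoc G]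
        _ = Q c * (ι (Xm (Av m) n.1 0) * (G * ι (Xm (Av m) 0 n.2))) := by
            rw [hpow1, mul_assoc]
        _ = Q c * (ι (Xm (Av m) n.1 0) * (ι (Xm (Av m) 0 n.2) * G)) := by rw [hpow2]
        _ = Q c * (ι (Xm (Av m) n.1 0) * ι (Xm (Av m) 0 n.2)) * G := by
            rw [← mul_assoc, ← mul_assoc, mul_assoc (Q c)]
    have hall : ∀ p : Lau (Av m), G * ι p = ι p * G := by
      intro p
      have hdecomp : ι p = ∑ n ∈ p.coeff.support, ι (AddMonoidAlgebra.single n (p.coeff n)) := by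
        conv_lhs => rw [← AddMonoidAlgebra.sum_coeff_single p]
        rw [map_finsuppSum]
        rfl
      rw [hdecomp, Finset.mul_sum, Finset.sum_mul]
      exact Finset.sum_congr rfl fun n _ => hsingle n (p.coeff n)
    rw [Semigroup.mem_center_iff]
    intro x
    obtain ⟨⟨f1, f2⟩, ⟨hf1, hf2, hx⟩, -⟩ := hfree x
    simp only at hx
    rw [hx]
    calc (ι f1 + ι f2 * T) * G = ι f1 * G + ι f2 * (T * G) := by rw [add_mul, mul_assoc]
      _ = G * ι f1 + ι f2 * (G * T) := by rw [← hall f1, ← hGT]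
      _ = G * ι f1 + (G * ι f2) * T := by rw [← mul_assoc, ← hall f2]
      _ = G * (ι f1 + ι f2 * T) := by rw [mul_add, ← mul_assoc]
end
end
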